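/- arXiv:math/0408351 — 5 statements merged into one kernel-verified Lean document; each statement's English description precedes it below -/
import Mathlib

section
/- Let R be a Noetherian commutative ring, G ≅ R^e free of rank e > 0, and E ⊆ G an R-submodule. If (0) = q_1 ∩ … ∩ q_s is a shortest primary decomposition of the zero ideal in R, then (0) = Q_1 ∩ … ∩ Q_s is a shortest primary decomposition of the zero ideal in the Rees algebra R_G(E), where Q_i = q_i·S_R(G) ∩ R_G(E). Consequently, the minimal primes of R_G(E) are exactly the ideals p·S_R(G) ∩ R_G(E) with p ∈ Min(R). -/
open IsLocalRing

noncomputable section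

/-- The embedding of `R^e` into the polynomial ring `S_R(R^e)` as linear forms. -/
def emb (R : Type*) [CommRing R] (e : ℕ) : (Fin e → R) →ₗ[R] MvPolynomial (Fin e) R where
  toFun v := ∑ i, v i • MvPolynomial.X i
  map_add' x y := by simp [add_smul, Finset.sum_add_distrib]
  map_smul' r x := by simp [Finset.smul_sum, smul_smul]

/-- `E_n`, the `n`-th Rees power of `E ⊆ R^e`. -/
def reesPow {R : Type*} [CommRing R] {e : ℕ} (E : Submodule R (Fin e → R)) (n : ℕ) :
    Submodule R (MvPolynomial (Fin e) R) :=
  (Submodule.map (emb R e) E) ^ n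

/-- The Rees algebra `R_G(E)` of `E ⊆ G = R^e`. -/
def ReesAlg {R : Type*} [CommRing R] {e : ℕ} (E : Submodule R (Fin e → R)) :
    Subalgebra R (MvPolynomial (Fin e) R) :=
  Algebra.adjoin R (Submodule.map (emb R e) E : Set (MvPolynomial (Fin e) R))

/-- The quotient module `G_n/E_n`. -/
abbrev GmodE {R : Type*} [CommRing R] {e : ℕ} (E : Submodule R (Fin e → R)) (n : ℕ) :=
  ↥(reesPow (⊤ : Submodule R (Fin e → R)) n) ⧸
    (Submodule.comap (reesPow (⊤ : Submodule R (Fin e → R)) n).subtype (reesPow E n))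

/-- Sup of lengths of `M`-regular sequences with entries in `I` (grade/depth). -/
def rdepth {R : Type*} [CommRing R] (I : Ideal R) (M : Type*) [AddCommGroup M] [Module R M] :
    ℕ∞ :=
  ⨆ (rs : List R) (_ : ∀ r ∈ rs, r ∈ I) (_ : RingTheory.Sequence.IsRegular M rs),
    (rs.length : ℕ∞)

/-- Depth over a local ring. -/
def mdepth (R : Type*) [CommRing R] [IsLocalRing R] (M : Type*) [AddCommGroup M] [Module R M] :
    ℕ∞ :=
  rdepth (maximalIdeal R) M

/-- The extension `m·R_G(E)` of the maximal ideal to the Rees algebra. -/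
def fibIdeal (R : Type*) [CommRing R] [IsLocalRing R] {e : ℕ} (E : Submodule R (Fin e → R)) :
    Ideal ↥(ReesAlg E) :=
  Ideal.map (algebraMap R ↥(ReesAlg E)) (maximalIdeal R)

/-- The analytic spread `ℓ_G(E) = dim R_G(E)/m·R_G(E)`. -/
def aSpread (R : Type*) [CommRing R] [IsLocalRing R] {e : ℕ} (E : Submodule R (Fin e → R)) :
    WithBot ℕ∞ :=
  ringKrullDim (↥(ReesAlg E) ⧸ fibIdeal R E)

/-- The image `(E + IG)/IG ⊆ (R/I)^e`. -/
def pushE {R : Type*} [CommRing R] {e : ℕ} (I : Ideal R) (E : Submodule R (Fin e → R)) :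
    Submodule (R ⧸ I) (Fin e → R ⧸ I) :=
  Submodule.span (R ⧸ I) ((fun v i => Ideal.Quotient.mk I (v i)) '' (E : Set (Fin e → R)))


section MyAux

open MvPolynomial

/-- A multivariate polynomial all of whose coefficients are nilpotent is nilpotent. -/
lemma my_isNilpotent_of_coeff {R : Type*} [CommRing R] {σ : Type*} {p : MvPolynomial σ R}
    (h : ∀ d, IsNilpotent (coeff d p)) : IsNilpotent p := by
  rw [← mem_nilradical, ← p.support_sum_monomial_coeff]
  refine Ideal.sum_mem _ fun d _ => mem_nilradical.2 ?_
  obtain ⟨n, hn⟩ := h d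
  exact ⟨n, by rw [monomial_pow, hn, monomial_zero]⟩

/-- Core lemma: over a local ring whose maximal ideal is nilpotent, a polynomial having a
unit coefficient is a non zero-divisor. -/
lemma my_mul_eq_zero {T : Type*} [CommRing T] [IsLocalRing T] {e : ℕ}
    (hm : IsNilpotent (IsLocalRing.maximalIdeal T))
    {f g : MvPolynomial (Fin e) T} (hfg : f * g = 0)
    {b : Fin e →₀ ℕ} (hb : IsUnit (coeff b g)) : f = 0 := by
  classical
  by_contra hf
  obtain ⟨k, hk⟩ := hm
  set m := IsLocalRing.maximalIdeal T with hmdef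
  have hPk : ¬ ∀ d, coeff d f ∈ m ^ k := by
    intro h
    apply hf
    ext d
    have := h d
    rw [hk] at this
    simpa using this
  have hex : ∃ j, (∀ d, coeff d f ∈ m ^ j) ∧ ¬ ∀ d, coeff d f ∈ m ^ (j + 1) := by
    by_contra hc
    push_neg at hc
    have hall : ∀ j, ∀ d, coeff d f ∈ m ^ j := by
      intro j
      induction j with
      | zero => intro d; simp
      | succ n ih => exact hc n ih
    exact hPk (hall k)
  obtain ⟨j, hj1, hj2⟩ := hex
  push_neg at hj2
  obtain ⟨d0, hd0⟩ := hj2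
  set M : MonomialOrder (Fin e) := MonomialOrder.lex with hM
  set s1 : Finset (Fin e →₀ ℕ) := f.support.filter (fun d => coeff d f ∉ m ^ (j + 1)) with hs1def
  set s2 : Finset (Fin e →₀ ℕ) := g.support.filter (fun d => coeff d g ∉ m) with hs2def
  have hmne : m ≠ ⊤ := (IsLocalRing.maximalIdeal.isMaximal T).ne_top
  have hs1 : s1.Nonempty :=
    ⟨d0, Finset.mem_filter.2
      ⟨mem_support_iff.2 (fun h0 => hd0 (by rw [h0]; exact zero_mem _)), hd0⟩⟩
  have hgb : coeff b g ∉ m := fun h => hmne (Ideal.eq_top_of_isUnit_mem _ h hb)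
  have hs2 : s2.Nonempty :=
    ⟨b, Finset.mem_filter.2 ⟨mem_support_iff.2 hb.ne_zero, hgb⟩⟩
  obtain ⟨a0, ha0s, ha0max⟩ := Finset.exists_max_image s1 (fun d => M.toSyn d) hs1
  obtain ⟨b0, hb0s, hb0max⟩ := Finset.exists_max_image s2 (fun d => M.toSyn d) hs2
  have ha0 : coeff a0 f ∉ m ^ (j + 1) := (Finset.mem_filter.1 ha0s).2
  have hb0m : coeff b0 g ∉ m := (Finset.mem_filter.1 hb0s).2
  obtain ⟨u, hu⟩ := IsLocalRing.notMem_maximalIdeal.1 hb0m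
  have hco : ∑ x ∈ Finset.HasAntidiagonal.antidiagonal (a0 + b0), coeff x.1 f * coeff x.2 g = 0 := by
    rw [← MvPolynomial.coeff_mul, hfg, coeff_zero]
  have hmem : ∀ x ∈ Finset.HasAntidiagonal.antidiagonal (a0 + b0), x ≠ (a0, b0) →
      coeff x.1 f * coeff x.2 g ∈ m ^ (j + 1) := by
    rintro ⟨a, c⟩ hx hne
    have hac : a + c = a0 + b0 := Finset.HasAntidiagonal.mem_antidiagonal.1 hx
    rcases le_or_gt (M.toSyn a) (M.toSyn a0) with hle | hlt
    · rcases le_or_gt (M.toSyn c) (M.toSyn b0) with hle2 | hlt2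
      · exfalso
        apply hne
        have hsyn : M.toSyn a + M.toSyn c = M.toSyn a0 + M.toSyn b0 := by
          rw [← map_add, ← map_add, hac]
        have ha : M.toSyn a = M.toSyn a0 := by
          rcases lt_or_eq_of_le hle with h | h
          · exact absurd hsyn (ne_of_lt (add_lt_add_of_lt_of_le h hle2))
          · exact h
        have hc : M.toSyn c = M.toSyn b0 := by
          rw [ha] at hsyn
          exact add_left_cancel hsyn
        exact Prod.ext (M.toSyn.injective ha) (M.toSyn.injective hc)
      · have hgc : coeff c g ∈ m := by
          by_contra hh
          have : c ∈ s2 := Finset.mem_filter.2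
            ⟨mem_support_iff.2 (fun h0 => hh (by rw [h0]; exact zero_mem _)), hh⟩
          exact absurd (hb0max c this) (not_le.2 hlt2)
        rw [pow_succ]
        exact Ideal.mul_mem_mul (hj1 a) hgc
    · have hfa : coeff a f ∈ m ^ (j + 1) := by
        by_contra hh
        have : a ∈ s1 := Finset.mem_filter.2
          ⟨mem_support_iff.2 (fun h0 => hh (by rw [h0]; exact zero_mem _)), hh⟩
        exact absurd (ha0max a this) (not_le.2 hlt)
      exact Ideal.mul_mem_right _ _ hfa
  have hrest : ∑ x ∈ (Finset.HasAntidiagonal.antidiagonal (a0 + b0)).erase (a0, b0),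
      coeff x.1 f * coeff x.2 g ∈ m ^ (j + 1) :=
    Ideal.sum_mem _ fun x hx =>
      hmem x (Finset.mem_of_mem_erase hx) (Finset.ne_of_mem_erase hx)
  have hdiag : ((a0, b0) : (Fin e →₀ ℕ) × (Fin e →₀ ℕ)) ∈ Finset.HasAntidiagonal.antidiagonal (a0 + b0) :=
    Finset.HasAntidiagonal.mem_antidiagonal.2 rfl
  have hsplit := Finset.add_sum_erase _
      (fun x : (Fin e →₀ ℕ) × (Fin e →₀ ℕ) => coeff x.1 f * coeff x.2 g) hdiag
  rw [hco] at hsplit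
  have hmain : coeff a0 f * coeff b0 g ∈ m ^ (j + 1) := by
    have heq : coeff a0 f * coeff b0 g = -∑ x ∈ (Finset.HasAntidiagonal.antidiagonal (a0 + b0)).erase (a0, b0),
        coeff x.1 f * coeff x.2 g := eq_neg_of_add_eq_zero_left hsplit
    rw [heq]
    exact neg_mem hrest
  apply ha0
  have h2 := Ideal.mul_mem_right ((u⁻¹ : Tˣ) : T) _ hmain
  rwa [← hu, Units.mul_inv_cancel_right] at h2

/-- If the zero ideal of a Noetherian commutative ring is primary, so is the zero ideal of a
polynomial ring over it. -/
lemma my_bot_isPrimary_mvp {R : Type*} [CommRing R] [IsNoetherianRing R] {e : ℕ}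
    (h : (⊥ : Ideal R).IsPrimary) :
    (⊥ : Ideal (MvPolynomial (Fin e) R)).IsPrimary := by
  obtain ⟨hne, hmain⟩ := Ideal.isPrimary_iff.1 h
  have hnt : Nontrivial R := by
    by_contra hggg
    rw [not_nontrivial_iff_subsingleton] at hggg
    exact hne (Subsingleton.elim _ _)
  rw [Ideal.isPrimary_iff]
  constructor
  · intro htop
    have h1 : (1 : MvPolynomial (Fin e) R) = 0 := by
      have : (1 : MvPolynomial (Fin e) R) ∈ (⊥ : Ideal (MvPolynomial (Fin e) R)) :=
        htop ▸ Submodule.mem_top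
      rwa [Ideal.mem_bot] at this
    exact one_ne_zero h1
  · intro x y hxy
    by_cases hy : IsNilpotent y
    · right
      obtain ⟨n, hn⟩ := hy
      exact Ideal.mem_radical_iff.2 ⟨n, Ideal.mem_bot.2 hn⟩
    · left
      have hzero : ∀ a b : R, a * b = 0 → a = 0 ∨ IsNilpotent b := by
        intro a b hab
        rcases hmain (Ideal.mem_bot.2 hab) with h1 | h1
        · exact Or.inl (Ideal.mem_bot.1 h1)
        · right
          obtain ⟨n, hn⟩ := Ideal.mem_radical_iff.1 h1
          exact ⟨n, Ideal.mem_bot.1 hn⟩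
      set N := nilradical R with hN
      have hNrad : N = Ideal.radical ⊥ := by rw [hN, nilradical, Ideal.zero_eq_bot]
      have hNp : N.IsPrime := by rw [hNrad]; exact Ideal.isPrime_radical h
      haveI := hNp
      have hMle : N.primeCompl ≤ nonZeroDivisors R := by
        intro t ht
        rw [mem_nonZeroDivisors_iff_right]
        intro z hz
        rcases hzero z t hz with h0 | hnil
        · exact h0
        · exact absurd (mem_nilradical.2 hnil) ht
      have hinj : Function.Injective (algebraMap R (Localization.AtPrime N)) :=
        IsLocalization.injective (Localization.AtPrime N) hMle
      haveI hTnoeth : IsNoetherianRing (Localization.AtPrime N) :=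
        IsLocalization.isNoetherianRing N.primeCompl (Localization.AtPrime N) inferInstance
      have hmnil : IsNilpotent (IsLocalRing.maximalIdeal (Localization N.primeCompl)) := by
        obtain ⟨n, hn⟩ := IsNoetherianRing.isNilpotent_nilradical (Localization.AtPrime N)
        refine ⟨n, ?_⟩
        have hle : IsLocalRing.maximalIdeal (Localization N.primeCompl)
            ≤ nilradical (Localization.AtPrime N) := by
          rw [← Localization.AtPrime.map_eq_maximalIdeal, Ideal.map_le_iff_le_comap]
          intro a ha
          rw [Ideal.mem_comap]
          exact mem_nilradical.2
            ((mem_nilradical.1 ha).map (algebraMap R (Localization.AtPrime N)))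
        have hpow : ∀ nn : ℕ, IsLocalRing.maximalIdeal (Localization N.primeCompl) ^ nn
            ≤ nilradical (Localization.AtPrime N) ^ nn := by
          intro nn
          induction nn with
          | zero => simp
          | succ n2 ih => rw [pow_succ, pow_succ]; exact Ideal.mul_mono ih hle
        have h3 := hpow n
        rw [hn] at h3
        exact le_bot_iff.1 (by simpa using h3)
      obtain ⟨b, hbnil⟩ : ∃ b, ¬ IsNilpotent (MvPolynomial.coeff b y) := by
        by_contra hc
        push_neg at hc
        exact hy (my_isNilpotent_of_coeff hc)
      have hbmem : MvPolynomial.coeff b y ∈ N.primeCompl :=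
        fun hmem => hbnil (mem_nilradical.1 hmem)
      have hbu : IsUnit (algebraMap R (Localization.AtPrime N) (MvPolynomial.coeff b y)) :=
        IsLocalization.map_units (Localization.AtPrime N) ⟨_, hbmem⟩
      have h0 : MvPolynomial.map (algebraMap R (Localization.AtPrime N)) x *
          MvPolynomial.map (algebraMap R (Localization.AtPrime N)) y = 0 := by
        rw [← map_mul, Ideal.mem_bot.1 hxy, map_zero]
      have hx0 : MvPolynomial.map (algebraMap R (Localization.AtPrime N)) x = 0 :=
        my_mul_eq_zero hmnil h0 (by rwa [MvPolynomial.coeff_map])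
      have hxz : x = 0 := by
        apply MvPolynomial.map_injective (algebraMap R (Localization.AtPrime N)) hinj
        rw [hx0, map_zero]
      exact Ideal.mem_bot.2 hxz

/-- The extension of a primary ideal of a Noetherian ring to a polynomial ring is primary. -/
lemma my_map_C_isPrimary {R : Type*} [CommRing R] [IsNoetherianRing R] {e : ℕ}
    {q : Ideal R} (hq : q.IsPrimary) :
    (Ideal.map (MvPolynomial.C (σ := Fin e)) q).IsPrimary := by
  have hbot : (⊥ : Ideal (R ⧸ q)).IsPrimary := by
    rw [Ideal.isPrimary_iff]
    constructor
    · intro hh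
      have h1 : (1 : R ⧸ q) ∈ (⊥ : Ideal (R ⧸ q)) := hh ▸ Submodule.mem_top
      rw [Ideal.mem_bot, ← map_one (Ideal.Quotient.mk q), Ideal.Quotient.eq_zero_iff_mem] at h1
      exact (Ideal.isPrimary_iff.1 hq).1 ((Ideal.eq_top_iff_one q).2 h1)
    · intro a b hab
      obtain ⟨x, rfl⟩ := Ideal.Quotient.mk_surjective a
      obtain ⟨y, rfl⟩ := Ideal.Quotient.mk_surjective b
      have hxy : x * y ∈ q := by
        rwa [Ideal.mem_bot, ← map_mul, Ideal.Quotient.eq_zero_iff_mem] at hab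
      rcases (Ideal.isPrimary_iff.1 hq).2 hxy with h1 | h1
      · exact Or.inl (Ideal.mem_bot.2 (Ideal.Quotient.eq_zero_iff_mem.2 h1))
      · right
        obtain ⟨n, hn⟩ := Ideal.mem_radical_iff.1 h1
        exact Ideal.mem_radical_iff.2
          ⟨n, Ideal.mem_bot.2 (by rw [← map_pow, Ideal.Quotient.eq_zero_iff_mem]; exact hn)⟩
  have hbotP := my_bot_isPrimary_mvp (e := e) hbot
  rw [Ideal.isPrimary_iff]
  have hker : RingHom.ker
      (MvPolynomial.map (Ideal.Quotient.mk q) :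
        MvPolynomial (Fin e) R →+* MvPolynomial (Fin e) (R ⧸ q))
      = Ideal.map MvPolynomial.C q := by
    rw [MvPolynomial.ker_map, Ideal.mk_ker]
  constructor
  · intro hh
    have h1 : (1 : MvPolynomial (Fin e) R) ∈ Ideal.map (MvPolynomial.C (σ := Fin e)) q :=
      hh ▸ Submodule.mem_top
    have h2 := MvPolynomial.mem_map_C_iff.1 h1 0
    rw [MvPolynomial.coeff_zero_one] at h2
    exact (Ideal.isPrimary_iff.1 hq).1 ((Ideal.eq_top_iff_one q).2 h2)
  · intro x y hxy
    have hmu : MvPolynomial.map (Ideal.Quotient.mk q) x *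
        MvPolynomial.map (Ideal.Quotient.mk q) y = 0 := by
      rw [← map_mul, ← RingHom.mem_ker, hker]
      exact hxy
    rcases (Ideal.isPrimary_iff.1 hbotP).2 (Ideal.mem_bot.2 hmu) with h1 | h1
    · left
      rw [← hker, RingHom.mem_ker]
      exact Ideal.mem_bot.1 h1
    · right
      obtain ⟨n, hn⟩ := Ideal.mem_radical_iff.1 h1
      refine Ideal.mem_radical_iff.2 ⟨n, ?_⟩
      rw [← hker, RingHom.mem_ker, map_pow]
      exact Ideal.mem_bot.1 hn

/-- The contraction of a primary ideal is primary. -/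
lemma my_isPrimary_comap {R S : Type*} {F : Type*} [CommRing R] [CommRing S]
    [FunLike F R S] [RingHomClass F R S] (f : F) {I : Ideal S} (h : I.IsPrimary) :
    (I.comap f).IsPrimary := by
  rw [Ideal.isPrimary_iff] at h ⊢
  constructor
  · intro hh
    have h1 : (1 : R) ∈ I.comap f := hh ▸ Submodule.mem_top
    rw [Ideal.mem_comap, map_one] at h1
    exact h.1 ((Ideal.eq_top_iff_one I).2 h1)
  · intro x y hxy
    rw [Ideal.mem_comap, map_mul] at hxy
    rcases h.2 hxy with hx | hy
    · exact Or.inl hx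
    · right
      obtain ⟨n, hn⟩ := Ideal.mem_radical_iff.1 hy
      exact Ideal.mem_radical_iff.2 ⟨n, by rw [Ideal.mem_comap, map_pow]; exact hn⟩

lemma my_comap_radical {R S : Type*} {F : Type*} [CommRing R] [CommRing S]
    [FunLike F R S] [RingHomClass F R S] (f : F) (I : Ideal S) :
    (I.comap f).radical = I.radical.comap f := by
  ext x
  simp only [Ideal.mem_radical_iff, Ideal.mem_comap, map_pow]

lemma my_map_C_isPrime {R : Type*} [CommRing R] {e : ℕ} {p : Ideal R} (hp : p.IsPrime) :
    (Ideal.map (MvPolynomial.C (σ := Fin e)) p).IsPrime := by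
  haveI := hp
  haveI : IsDomain (R ⧸ p) := (Ideal.Quotient.isDomain_iff_prime p).2 hp
  rw [← Ideal.mk_ker (I := p), ← MvPolynomial.ker_map]
  exact RingHom.ker_isPrime _

lemma my_radical_map_C {R : Type*} [CommRing R] {e : ℕ} {q : Ideal R} (hq : q.IsPrimary) :
    (Ideal.map (MvPolynomial.C (σ := Fin e)) q).radical
      = Ideal.map (MvPolynomial.C (σ := Fin e)) q.radical := by
  have hprime := my_map_C_isPrime (e := e) (Ideal.isPrime_radical hq)
  exact le_antisymm (hprime.radical_le_iff.2 (Ideal.map_mono Ideal.le_radical))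
    (Ideal.map_radical_le MvPolynomial.C)

/-- Contracting back to `R` recovers the original ideal. -/
lemma my_contract {R : Type*} [CommRing R] {e : ℕ}
    (A : Subalgebra R (MvPolynomial (Fin e) R)) (I : Ideal R) :
    Ideal.comap (algebraMap R ↥A)
      (Ideal.comap A.val (Ideal.map (algebraMap R (MvPolynomial (Fin e) R)) I)) = I := by
  ext x
  simp only [Ideal.mem_comap]
  have hval : A.val (algebraMap R ↥A x) = MvPolynomial.C x := rfl
  rw [hval, MvPolynomial.algebraMap_eq, MvPolynomial.mem_map_C_iff]
  constructor
  · intro h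
    have h1 := h 0
    rwa [MvPolynomial.coeff_C, if_pos rfl] at h1
  · intro h d
    rw [MvPolynomial.coeff_C]
    split
    · exact h
    · exact I.zero_mem

lemma my_iInf_eq_bot {R : Type*} [CommRing R] {e : ℕ}
    (A : Subalgebra R (MvPolynomial (Fin e) R)) {s : ℕ} {q : Fin s → Ideal R}
    (hdec : ⨅ i, q i = ⊥) :
    ⨅ i, Ideal.comap A.val (Ideal.map (algebraMap R (MvPolynomial (Fin e) R)) (q i)) = ⊥ := by
  rw [MvPolynomial.algebraMap_eq]
  ext x
  simp only [Ideal.mem_iInf, Ideal.mem_comap, MvPolynomial.mem_map_C_iff, Ideal.mem_bot]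
  constructor
  · intro h
    have hall : ∀ d, MvPolynomial.coeff d (A.val x) = 0 := by
      intro d
      have hmem : MvPolynomial.coeff d (A.val x) ∈ ⨅ i, q i :=
        Ideal.mem_iInf.2 fun i => h i d
      rwa [hdec, Ideal.mem_bot] at hmem
    have hx : A.val x = 0 := by
      apply MvPolynomial.ext
      intro d
      rw [hall d, MvPolynomial.coeff_zero]
    exact ZeroMemClass.coe_eq_zero.1 hx
  · rintro rfl i d
    simp

lemma my_minimalPrimes {R : Type*} [CommRing R] [IsNoetherianRing R] {e : ℕ}
    (A : Subalgebra R (MvPolynomial (Fin e) R)) {s : ℕ} {q : Fin s → Ideal R}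
    (hprim : ∀ i, (q i).IsPrimary) (hdec : ⨅ i, q i = ⊥) :
    minimalPrimes ↥A =
      { P | ∃ p ∈ minimalPrimes R, P = Ideal.comap A.val
          (Ideal.map (algebraMap R (MvPolynomial (Fin e) R)) p) } := by
  classical
  have Cmap : ∀ I : Ideal R, Ideal.map (algebraMap R (MvPolynomial (Fin e) R)) I
      = Ideal.map MvPolynomial.C I := fun I => by rw [MvPolynomial.algebraMap_eq]
  have hQprime : ∀ p : Ideal R, p.IsPrime →
      (Ideal.comap A.val (Ideal.map (algebraMap R (MvPolynomial (Fin e) R)) p)).IsPrime := by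
    intro p hp
    haveI : (Ideal.map (algebraMap R (MvPolynomial (Fin e) R)) p).IsPrime := by
      rw [Cmap]
      exact my_map_C_isPrime hp
    exact Ideal.IsPrime.comap _
  have hmin : ∀ P' : Ideal ↥A, P'.IsPrime →
      ∃ i, Ideal.comap A.val
        (Ideal.map (algebraMap R (MvPolynomial (Fin e) R)) ((q i).radical)) ≤ P' := by
    intro P' hP'
    have h1 : (Finset.univ.inf fun i =>
        Ideal.comap A.val (Ideal.map (algebraMap R (MvPolynomial (Fin e) R)) (q i))) ≤ P' := by
      rw [Finset.inf_eq_iInf]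
      have h2 : ⨅ i ∈ Finset.univ,
          Ideal.comap A.val (Ideal.map (algebraMap R (MvPolynomial (Fin e) R)) (q i))
          = ⨅ i, Ideal.comap A.val (Ideal.map (algebraMap R (MvPolynomial (Fin e) R)) (q i)) :=
        iInf_congr fun i => iInf_pos (Finset.mem_univ i)
      rw [h2, my_iInf_eq_bot A hdec]
      exact bot_le
    obtain ⟨i, -, hi⟩ := (Ideal.IsPrime.inf_le' hP').1 h1
    refine ⟨i, ?_⟩
    have h3 : (Ideal.comap A.val
        (Ideal.map (algebraMap R (MvPolynomial (Fin e) R)) (q i))).radical ≤ P' := by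
      rw [← hP'.radical]
      exact Ideal.radical_mono hi
    rwa [my_comap_radical, Cmap, my_radical_map_C (hprim i), ← Cmap] at h3
  ext P
  simp only [Set.mem_setOf_eq]
  constructor
  · intro hP
    have hPmin : Minimal (fun J : Ideal ↥A => J.IsPrime ∧ ⊥ ≤ J) P := hP
    have hPp : P.IsPrime := hPmin.1.1
    obtain ⟨i, hi⟩ := hmin P hPp
    haveI hpi : ((q i).radical).IsPrime := Ideal.isPrime_radical (hprim i)
    obtain ⟨p, hpmin, hple⟩ := Ideal.exists_minimalPrimes_le (J := (q i).radical) bot_le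
    refine ⟨p, hpmin, ?_⟩
    have hpminM : Minimal (fun J : Ideal R => J.IsPrime ∧ ⊥ ≤ J) p := hpmin
    have hP0 : (Ideal.comap A.val
        (Ideal.map (algebraMap R (MvPolynomial (Fin e) R)) p)).IsPrime :=
      hQprime p hpminM.1.1
    have hle : Ideal.comap A.val (Ideal.map (algebraMap R (MvPolynomial (Fin e) R)) p) ≤ P :=
      le_trans (Ideal.comap_mono (Ideal.map_mono hple)) hi
    exact le_antisymm (hPmin.2 ⟨hP0, bot_le⟩ hle) hle
  · rintro ⟨p, hpmin, rfl⟩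
    have hpminM : Minimal (fun J : Ideal R => J.IsPrime ∧ ⊥ ≤ J) p := hpmin
    refine ⟨⟨hQprime p hpminM.1.1, bot_le⟩, ?_⟩
    rintro P' ⟨hP'p, -⟩ hP'le
    obtain ⟨i, hi⟩ := hmin P' hP'p
    have hcon : (q i).radical ≤ p := by
      have h3 := Ideal.comap_mono (f := algebraMap R ↥A) (le_trans hi hP'le)
      rwa [my_contract, my_contract] at h3
    have h4 : p ≤ (q i).radical := hpminM.2 ⟨Ideal.isPrime_radical (hprim i), bot_le⟩ hcon
    exact le_trans (Ideal.comap_mono (Ideal.map_mono h4)) hi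

end MyAux


theorem stmt1 (R : Type*) [CommRing R] [IsNoetherianRing R] (e : ℕ) (he : 0 < e)
    (E : Submodule R (Fin e → R)) (s : ℕ) (q : Fin s → Ideal R)
    (hprim : ∀ i, (q i).IsPrimary)
    (hdec : ⨅ i, q i = ⊥)
    (hrad : Function.Injective fun i => (q i).radical)
    (hirr : ∀ i, ¬ (⨅ j ∈ {j | j ≠ i}, q j) ≤ q i) :
    (∀ i, (Ideal.comap (ReesAlg E).val
        (Ideal.map (algebraMap R (MvPolynomial (Fin e) R)) (q i))).IsPrimary) ∧
    (⨅ i, Ideal.comap (ReesAlg E).val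
        (Ideal.map (algebraMap R (MvPolynomial (Fin e) R)) (q i)) = ⊥) ∧
    (Function.Injective fun i => (Ideal.comap (ReesAlg E).val
        (Ideal.map (algebraMap R (MvPolynomial (Fin e) R)) (q i))).radical) ∧
    (∀ i, ¬ (⨅ j ∈ {j | j ≠ i}, Ideal.comap (ReesAlg E).val
          (Ideal.map (algebraMap R (MvPolynomial (Fin e) R)) (q j))) ≤
        Ideal.comap (ReesAlg E).val
          (Ideal.map (algebraMap R (MvPolynomial (Fin e) R)) (q i))) ∧
    minimalPrimes ↥(ReesAlg E) =
      { P | ∃ p ∈ minimalPrimes R, P = Ideal.comap (ReesAlg E).val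
          (Ideal.map (algebraMap R (MvPolynomial (Fin e) R)) p) } := by
  classical
  refine ⟨fun i => ?_, my_iInf_eq_bot (ReesAlg E) hdec, ?_, fun i hle => ?_, ?_⟩
  · rw [MvPolynomial.algebraMap_eq]
    exact my_isPrimary_comap _ (my_map_C_isPrimary (hprim i))
  · intro i j hij
    apply hrad
    have hij' : (Ideal.comap (ReesAlg E).val
          (Ideal.map (algebraMap R (MvPolynomial (Fin e) R)) (q i))).radical
        = (Ideal.comap (ReesAlg E).val
          (Ideal.map (algebraMap R (MvPolynomial (Fin e) R)) (q j))).radical := hij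
    show (q i).radical = (q j).radical
    have h2 := congrArg (Ideal.comap (algebraMap R ↥(ReesAlg E))) hij'
    rwa [← my_comap_radical, ← my_comap_radical, my_contract, my_contract] at h2
  · apply hirr i
    have h1 : ⨅ j ∈ {j | j ≠ i}, q j ≤ Ideal.comap (algebraMap R ↥(ReesAlg E))
        (⨅ j ∈ {j | j ≠ i}, Ideal.comap (ReesAlg E).val
          (Ideal.map (algebraMap R (MvPolynomial (Fin e) R)) (q j))) := by
      intro x hx
      rw [Ideal.mem_comap, Ideal.mem_iInf]
      intro j
      rw [Ideal.mem_iInf]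
      intro hj
      have hxj : x ∈ q j := Ideal.mem_iInf.1 (Ideal.mem_iInf.1 hx j) hj
      rw [← my_contract (ReesAlg E) (q j)] at hxj
      exact hxj
    exact h1.trans ((Ideal.comap_mono hle).trans (my_contract (ReesAlg E) (q i)).le)
  · exact my_minimalPrimes (ReesAlg E) hprim hdec


end
end

section
/- Let R be a Noetherian commutative ring, G ≅ R^e free of rank e > 0, E ⊆ G an R-submodule, and p a prime ideal of R. Set P = p·S_R(G) ∩ R_G(E). Then there is an isomorphism of graded rings R_G(E)/P ≅ R_{G̅}(E̅), where R̅ = R/p, G̅ = G/pG, and E̅ = (E + pG)/pG ⊆ G̅. -/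
open IsLocalRing

noncomputable section

theorem stmt2 (R : Type*) [CommRing R] [IsNoetherianRing R] (e : ℕ) (he : 0 < e)
    (E : Submodule R (Fin e → R)) (p : Ideal R) [p.IsPrime] :
    Nonempty ((↥(ReesAlg E) ⧸ Ideal.comap (ReesAlg E).val
        (Ideal.map (algebraMap R (MvPolynomial (Fin e) R)) p)) ≃+*
      ↥(ReesAlg (pushE p E))) := by
  classical
  set q := Ideal.Quotient.mk p with hq
  set F : MvPolynomial (Fin e) R →+* MvPolynomial (Fin e) (R ⧸ p) := MvPolynomial.map q with hF
  have hcomm : ∀ v : Fin e → R, F (emb R e v) = emb (R ⧸ p) e (fun i => q (v i)) := by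
    intro v
    show F (∑ i, v i • MvPolynomial.X i) = ∑ i, q (v i) • MvPolynomial.X i
    rw [map_sum]
    refine Finset.sum_congr rfl fun i _ => ?_
    rw [MvPolynomial.smul_eq_C_mul, MvPolynomial.smul_eq_C_mul, map_mul,
      MvPolynomial.map_C, MvPolynomial.map_X]
  have hadj : ReesAlg (pushE p E)
      = Algebra.adjoin (R ⧸ p) (F '' ↑(Submodule.map (emb R e) E)) := by
    unfold ReesAlg pushE
    rw [Submodule.map_span, Algebra.adjoin_span]
    congr 1
    rw [Submodule.map_coe, ← Set.image_comp, ← Set.image_comp]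
    exact Set.image_congr' (fun v => (hcomm v).symm)
  have hA : F '' (Set.range (algebraMap R (MvPolynomial (Fin e) R)))
      = Set.range (algebraMap (R ⧸ p) (MvPolynomial (Fin e) (R ⧸ p))) := by
    ext y
    simp only [MvPolynomial.algebraMap_eq, Set.mem_image, Set.mem_range]
    constructor
    · rintro ⟨x, ⟨a, rfl⟩, rfl⟩
      exact ⟨q a, (MvPolynomial.map_C q a).symm⟩
    · rintro ⟨a, rfl⟩
      obtain ⟨b, rfl⟩ := Ideal.Quotient.mk_surjective a
      exact ⟨MvPolynomial.C b, ⟨b, rfl⟩, MvPolynomial.map_C q b⟩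
  have himg : F '' (ReesAlg E : Set (MvPolynomial (Fin e) R))
      = (ReesAlg (pushE p E) : Set (MvPolynomial (Fin e) (R ⧸ p))) := by
    have h1 : (ReesAlg E : Set (MvPolynomial (Fin e) R))
        = (Subring.closure (Set.range (algebraMap R (MvPolynomial (Fin e) R))
            ∪ ↑(Submodule.map (emb R e) E)) : Set (MvPolynomial (Fin e) R)) := by
      rw [← Algebra.adjoin_eq_ring_closure]; rfl
    have h2 : (ReesAlg (pushE p E) : Set (MvPolynomial (Fin e) (R ⧸ p)))
        = (Subring.closure (Set.range (algebraMap (R ⧸ p) (MvPolynomial (Fin e) (R ⧸ p)))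
            ∪ (F '' ↑(Submodule.map (emb R e) E))) : Set (MvPolynomial (Fin e) (R ⧸ p))) := by
      rw [hadj, ← Algebra.adjoin_eq_ring_closure]; rfl
    rw [h1, h2, ← Subring.coe_map, RingHom.map_closure, Set.image_union, hA]
  -- the restricted map
  have hmem : ∀ x : ↥(ReesAlg E), F x.1 ∈ ReesAlg (pushE p E) := by
    intro x
    have : F x.1 ∈ F '' (ReesAlg E : Set (MvPolynomial (Fin e) R)) := ⟨x.1, x.2, rfl⟩
    rwa [himg] at this
  let g : ↥(ReesAlg E) →+* ↥(ReesAlg (pushE p E)) :=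
    (F.comp ((ReesAlg E).val : ↥(ReesAlg E) →ₐ[R] MvPolynomial (Fin e) R).toRingHom).codRestrict
      (ReesAlg (pushE p E)).toSubring hmem
  have hsurj : Function.Surjective g := by
    rintro ⟨y, hy⟩
    have hy' : y ∈ ⇑F '' (ReesAlg E : Set (MvPolynomial (Fin e) R)) := by
      rw [himg]; exact hy
    obtain ⟨x, hx, hxy⟩ := hy'
    exact ⟨⟨x, hx⟩, Subtype.ext hxy⟩
  have hker : Ideal.comap (ReesAlg E).val
      (Ideal.map (algebraMap R (MvPolynomial (Fin e) R)) p) = RingHom.ker g := by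
    have hkF : Ideal.map (algebraMap R (MvPolynomial (Fin e) R)) p = RingHom.ker F := by
      rw [hF, MvPolynomial.ker_map, Ideal.mk_ker, MvPolynomial.algebraMap_eq]
    rw [hkF]
    ext x
    simp only [Ideal.mem_comap, RingHom.mem_ker]
    constructor
    · intro h
      exact Subtype.ext h
    · intro h
      exact congrArg Subtype.val h
  exact ⟨(Ideal.quotEquivOfEq hker).trans (RingHom.quotientKerEquivOfSurjective hsurj)⟩


end
end

section
/- Let (R, m) be a Noetherian local ring with dim R > 0, G ≅ R^e free of rank e > 0, E ⊊ G an R-submodule, and let m·R_G(E) denote the extension of m to the Rees algebra. Then m·R_G(E) is not contained in any minimal prime of R_G(E); equivalently, ht(m·R_G(E)) > 0, and hence dim(R_G(E)/m·R_G(E)) < dim R_G(E). -/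
open IsLocalRing

noncomputable section

/-- The height of an ideal: the infimum of the heights of the primes containing it. -/
def idealHeight {A : Type*} [CommRing A] (I : Ideal A) : ℕ∞ :=
  ⨅ (p : PrimeSpectrum A) (_ : I ≤ p.asIdeal), Order.height p

/-! ### Auxiliary lemmas -/

attribute [local instance] MvPolynomial.algebraMvPolynomial

section Aux

open MvPolynomial in
/-- In a chain of three primes of `R[x]` (as `MvPolynomial Unit R`), the contractions of the
bottom and top primes to `R` differ. -/
lemma aux_three_chain_comap_ne {R : Type*} [CommRing R]
    {q₀ q₁ q₂ : Ideal (MvPolynomial Unit R)}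
    [hq₀ : q₀.IsPrime] [hq₁ : q₁.IsPrime] [hq₂ : q₂.IsPrime]
    (h01 : q₀ < q₁) (h12 : q₁ < q₂) :
    Ideal.comap (C : R →+* MvPolynomial Unit R) q₀ ≠
      Ideal.comap (C : R →+* MvPolynomial Unit R) q₂ := by
  intro heq
  haveI hp : (Ideal.comap (C : R →+* MvPolynomial Unit R) q₀).IsPrime :=
    Ideal.comap_isPrime _ _
  have hcom : ∀ q : Ideal (MvPolynomial Unit R), q₀ ≤ q → q ≤ q₂ →
      Ideal.comap (C : R →+* MvPolynomial Unit R) q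
        = Ideal.comap (C : R →+* MvPolynomial Unit R) q₀ := fun q h1 h2 =>
    le_antisymm ((Ideal.comap_mono h2).trans heq.ge) (Ideal.comap_mono h1)
  set D := R ⧸ Ideal.comap (C : R →+* MvPolynomial Unit R) q₀ with hDdef
  let φ : MvPolynomial Unit R →+* MvPolynomial Unit D :=
    MvPolynomial.map (Ideal.Quotient.mk (Ideal.comap (C : R →+* MvPolynomial Unit R) q₀))
  have hφs : Function.Surjective φ := MvPolynomial.map_surjective _ Ideal.Quotient.mk_surjective
  have hker : RingHom.ker φ ≤ q₀ := by
    rw [MvPolynomial.ker_map, Ideal.mk_ker, Ideal.map_le_iff_le_comap]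
  let Q : Ideal (MvPolynomial Unit R) → Ideal (MvPolynomial Unit D) := fun q => Ideal.map φ q
  have hcomap : ∀ q : Ideal (MvPolynomial Unit R), q₀ ≤ q → Ideal.comap φ (Q q) = q := by
    intro q hq
    rw [Ideal.comap_map_of_surjective φ hφs]
    exact sup_eq_left.mpr (le_trans (le_of_eq rfl) (hker.trans hq))
  have hQprime : ∀ q : Ideal (MvPolynomial Unit R), q₀ ≤ q → q.IsPrime → (Q q).IsPrime := by
    intro q hq hqp
    exact Ideal.map_isPrime_of_surjective hφs (hker.trans hq)
  have hQlt : ∀ q q' : Ideal (MvPolynomial Unit R), q₀ ≤ q → q < q' → Q q < Q q' := by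
    intro q q' hq hlt
    refine lt_of_le_of_ne (Ideal.map_mono hlt.le) ?_
    intro hEq
    exact hlt.ne (by rw [← hcomap q hq, ← hcomap q' (hq.trans hlt.le), hEq])
  have hD : ∀ q : Ideal (MvPolynomial Unit R), q₀ ≤ q → q ≤ q₂ →
      ∀ d : D, (MvPolynomial.C d : MvPolynomial Unit D) ∈ Q q → d = 0 := by
    intro q h1 h2 d hd
    obtain ⟨r, rfl⟩ := Ideal.Quotient.mk_surjective d
    have : φ (MvPolynomial.C r) ∈ Q q := by rwa [MvPolynomial.map_C]
    have hrq : (MvPolynomial.C r : MvPolynomial Unit R) ∈ q := by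
      rw [← hcomap q h1]; exact this
    have hrp : r ∈ Ideal.comap (C : R →+* MvPolynomial Unit R) q₀ := by
      rw [← hcom q h1 h2]; exact hrq
    exact Ideal.Quotient.eq_zero_iff_mem.mpr hrp
  -- localize at nonzero constants
  let K := FractionRing D
  let M : Submonoid (MvPolynomial Unit D) :=
    (nonZeroDivisors D).map (MvPolynomial.C : D →+* MvPolynomial Unit D)
  haveI hloc : IsLocalization M (MvPolynomial Unit K) :=
    MvPolynomial.isLocalization (nonZeroDivisors D) K
  have hdisj : ∀ q : Ideal (MvPolynomial Unit R), q₀ ≤ q → q ≤ q₂ →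
      Disjoint (M : Set (MvPolynomial Unit D)) (Q q : Set (MvPolynomial Unit D)) := by
    intro q h1 h2
    rw [Set.disjoint_left]
    rintro x ⟨d, hd, rfl⟩ hx
    have : d = 0 := hD q h1 h2 d hx
    subst this
    exact (mem_nonZeroDivisors_iff_ne_zero.mp hd) rfl
  let e := IsLocalization.orderIsoOfPrime M (MvPolynomial Unit K)
  let P₀ := e.symm ⟨Q q₀, hQprime _ le_rfl hq₀, hdisj _ le_rfl (h01.le.trans h12.le)⟩
  let P₁ := e.symm ⟨Q q₁, hQprime _ h01.le hq₁, hdisj _ h01.le h12.le⟩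
  let P₂ := e.symm ⟨Q q₂, hQprime _ (h01.le.trans h12.le) hq₂, hdisj _ (h01.le.trans h12.le) le_rfl⟩
  have h01' : P₀ < P₁ := e.symm.strictMono (Subtype.mk_lt_mk.mpr (hQlt _ _ le_rfl h01))
  have h12' : P₁ < P₂ := e.symm.strictMono (Subtype.mk_lt_mk.mpr (hQlt _ _ h01.le h12))
  -- transfer to K[X]
  let ε : MvPolynomial Unit K ≃+* Polynomial K := (MvPolynomial.pUnitAlgEquiv K).toRingEquiv
  let ρ : Ideal (MvPolynomial Unit K) → Ideal (Polynomial K) := fun I =>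
    Ideal.comap (ε.symm : Polynomial K →+* MvPolynomial Unit K) I
  have hρinj : Function.Injective ρ :=
    Ideal.comap_injective_of_surjective (ε.symm : Polynomial K →+* MvPolynomial Unit K)
      ε.symm.surjective
  have hρlt : ∀ I J : Ideal (MvPolynomial Unit K), I < J → ρ I < ρ J := by
    intro I J hIJ
    exact lt_of_le_of_ne (Ideal.comap_mono hIJ.le) (fun hEq => hIJ.ne (hρinj hEq))
  haveI hP₀ : (P₀ : Ideal (MvPolynomial Unit K)).IsPrime := P₀.2
  haveI hP₁ : (P₁ : Ideal (MvPolynomial Unit K)).IsPrime := P₁.2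
  haveI hP₂ : (P₂ : Ideal (MvPolynomial Unit K)).IsPrime := P₂.2
  haveI hR1 : (ρ P₁).IsPrime := Ideal.comap_isPrime _ _
  haveI hR2 : (ρ P₂).IsPrime := Ideal.comap_isPrime _ _
  have hlt01 : ρ P₀ < ρ P₁ := hρlt _ _ (Subtype.coe_lt_coe.mpr h01')
  have hlt12 : ρ P₁ < ρ P₂ := hρlt _ _ (Subtype.coe_lt_coe.mpr h12')
  have hne : (ρ P₁ : Ideal (Polynomial K)) ≠ ⊥ := by
    rintro hbot
    rw [hbot] at hlt01
    exact not_lt_bot hlt01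
  haveI hmax : (ρ P₁).IsMaximal := IsPrime.to_maximal_ideal hne
  have : ρ P₂ = ⊤ := hmax.1.2 _ hlt12
  exact hR2.ne_top this

/-- Krull dimension of `R[x]` is finite when that of `R` is. -/
lemma aux_dim_polyUnit_lt_top {R : Type*} [CommRing R] (h : ringKrullDim R < ⊤) :
    ringKrullDim (MvPolynomial Unit R) < ⊤ := by
  by_cases hR : Nontrivial R
  · haveI := hR
    haveI : Nontrivial (MvPolynomial Unit R) := inferInstance
    -- extract a natural number bound on chains in Spec R
    obtain ⟨d, hd⟩ : ∃ d : ℕ, ∀ s : LTSeries (PrimeSpectrum R), s.length ≤ d := by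
      have hnb : ringKrullDim R ≠ ⊥ := by
        intro hb
        have h0 : (0 : WithBot ℕ∞) ≤ ringKrullDim R :=
          Order.krullDim_nonneg
        rw [hb] at h0
        simp at h0
      obtain ⟨e, hD⟩ := WithBot.ne_bot_iff_exists.mp hnb
      have het : e ≠ ⊤ := by
        intro hetop
        rw [hetop] at hD
        rw [WithBot.coe_top] at hD
        exact h.ne hD.symm
      obtain ⟨d, rfl⟩ := WithTop.ne_top_iff_exists.mp het
      refine ⟨d, fun s => ?_⟩
      have hle := Order.LTSeries.length_le_krullDim s
      rw [show Order.krullDim (PrimeSpectrum R) = ringKrullDim R from rfl, ← hD] at hle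
      have hle' : ((s.length : ℕ∞) : WithBot ℕ∞) ≤ ((d : ℕ∞) : WithBot ℕ∞) := hle
      exact_mod_cast WithBot.coe_le_coe.mp hle'
    have key : ∀ s : LTSeries (PrimeSpectrum (MvPolynomial Unit R)), s.length ≤ 2 * d + 1 := by
      intro s
      by_contra hN
      push_neg at hN
      set N := s.length with hNdef
      let c : ℕ → PrimeSpectrum R := fun m =>
        ⟨Ideal.comap (MvPolynomial.C : R →+* MvPolynomial Unit R)
          (s ⟨min m N, by omega⟩).asIdeal, Ideal.comap_isPrime _ _⟩
      have hcmono : ∀ m m' : ℕ, m ≤ m' → c m ≤ c m' := by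
        intro m m' hmm
        exact Ideal.comap_mono (s.monotone (by simp [Fin.mk_le_mk]; omega))
      have hcstep : ∀ m : ℕ, m + 2 ≤ N → c m < c (m + 2) := by
        intro m hm
        have hmin : min m N = m := by omega
        have hmin1 : min (m + 1) N = m + 1 := by omega
        have hmin2 : min (m + 2) N = m + 2 := by omega
        have l01 : s ⟨min m N, by omega⟩ < s ⟨min (m+1) N, by omega⟩ :=
          s.strictMono (by simp [Fin.mk_lt_mk]; omega)
        have l12 : s ⟨min (m+1) N, by omega⟩ < s ⟨min (m+2) N, by omega⟩ :=
          s.strictMono (by simp [Fin.mk_lt_mk]; omega)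
        have hne := aux_three_chain_comap_ne
          (q₀ := (s ⟨min m N, by omega⟩).asIdeal)
          (q₁ := (s ⟨min (m+1) N, by omega⟩).asIdeal)
          (q₂ := (s ⟨min (m+2) N, by omega⟩).asIdeal)
          l01 l12
        refine lt_of_le_of_ne (hcmono m (m+2) (by omega)) ?_
        intro hEq
        exact hne (congrArg PrimeSpectrum.asIdeal hEq)
      have hclt : ∀ m m' : ℕ, m + 2 ≤ m' → m' ≤ N → c m < c m' := by
        intro m m' h2 hN'
        exact lt_of_lt_of_le (hcstep m (by omega)) (hcmono (m+2) m' (by omega))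
      let g : LTSeries (PrimeSpectrum R) := LTSeries.mk (d + 1)
        (fun j => c (2 * (j : ℕ)))
        (by
          intro j j' hjj
          have hj' : (j' : ℕ) ≤ d + 1 := by omega
          exact hclt _ _ (by omega) (by omega))
      have := hd g
      simp [g, LTSeries.mk] at this
    have hbound : ringKrullDim (MvPolynomial Unit R)
        ≤ (((2 * d + 1 : ℕ) : ℕ∞) : WithBot ℕ∞) := by
      rw [show ringKrullDim (MvPolynomial Unit R)
          = Order.krullDim (PrimeSpectrum (MvPolynomial Unit R)) from rfl,
        Order.krullDim_eq_iSup_length, WithBot.coe_le_coe]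
      refine iSup_le fun s => ?_
      exact_mod_cast key s
    refine lt_of_le_of_lt hbound ?_
    rw [← WithBot.coe_top, WithBot.coe_lt_coe]
    exact WithTop.coe_lt_top _
  · haveI : Subsingleton R := not_nontrivial_iff_subsingleton.mp hR
    haveI : Subsingleton (MvPolynomial Unit R) :=
      Function.Surjective.subsingleton (f := (MvPolynomial.C : R →+* MvPolynomial Unit R))
        (fun p => ⟨MvPolynomial.constantCoeff p, Subsingleton.elim _ _⟩)
    rw [ringKrullDim_eq_bot_of_subsingleton]
    exact bot_lt_top

/-- Krull dimension of a polynomial ring in finitely many variables is finite when that of the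
base is. -/
lemma aux_dim_mvPolyFin_lt_top (k : Type*) [CommRing k] (hk : ringKrullDim k < ⊤) :
    ∀ n : ℕ, ringKrullDim (MvPolynomial (Fin n) k) < ⊤
  | 0 => by
      rw [ringKrullDim_eq_of_ringEquiv (MvPolynomial.isEmptyRingEquiv k (Fin 0))]
      exact hk
  | (n + 1) => by
      rw [ringKrullDim_eq_of_ringEquiv
        (((MvPolynomial.finSuccEquiv k n).toRingEquiv).trans
          ((MvPolynomial.pUnitAlgEquiv (MvPolynomial (Fin n) k)).symm.toRingEquiv))]
      exact aux_dim_polyUnit_lt_top (aux_dim_mvPolyFin_lt_top k hk n)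

end Aux

set_option maxHeartbeats 1000000
set_option synthInstance.maxHeartbeats 400000

theorem stmt5 (R : Type*) [CommRing R] [IsNoetherianRing R] [IsLocalRing R]
    (e : ℕ) (he : 0 < e) (E : Submodule R (Fin e → R)) (hE : E ≠ ⊤)
    (hdim : (0 : WithBot ℕ∞) < ringKrullDim R) :
    (∀ P ∈ minimalPrimes ↥(ReesAlg E), ¬ fibIdeal R E ≤ P) ∧
    0 < idealHeight (fibIdeal R E) ∧
    aSpread R E < ringKrullDim ↥(ReesAlg E) := by
  classical
  haveI hmax : (maximalIdeal R).IsMaximal := IsLocalRing.maximalIdeal.isMaximal R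
  let ι : ↥(ReesAlg E) →+* MvPolynomial (Fin e) R := ((ReesAlg E).val).toRingHom
  have hιinj : Function.Injective ι := Subtype.coe_injective
  let Q : Ideal R → Ideal ↥(ReesAlg E) := fun q =>
    Ideal.comap ι (Ideal.map (MvPolynomial.C : R →+* MvPolynomial (Fin e) R) q)
  have hQprime : ∀ q : Ideal R, q.IsPrime → (Q q).IsPrime := by
    intro q hq
    haveI := hq
    haveI : (Ideal.map (MvPolynomial.C : R →+* MvPolynomial (Fin e) R) q).IsPrime := by
      rw [← Ideal.Quotient.isDomain_iff_prime]
      have eqv := (MvPolynomial.quotientEquivQuotientMvPolynomial (σ := Fin e) q).symm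
      exact MulEquiv.isDomain (MvPolynomial (Fin e) (R ⧸ q)) eqv.toRingEquiv.toMulEquiv
    exact Ideal.comap_isPrime _ _
  have hmemQ : ∀ (q : Ideal R) (x : ↥(ReesAlg E)),
      x ∈ Q q ↔ ∀ m, MvPolynomial.coeff m (x : MvPolynomial (Fin e) R) ∈ q := by
    intro q x
    exact Iff.trans Ideal.mem_comap MvPolynomial.mem_map_C_iff
  -- Part 1
  have h1 : ∀ P ∈ minimalPrimes ↥(ReesAlg E), ¬ fibIdeal R E ≤ P := by
    rintro P hP hle
    haveI hPp : P.IsPrime := hP.1.1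
    have hQP : ∃ q ∈ minimalPrimes R, Q q ≤ P := by
      by_contra hno
      push_neg at hno
      have hchoice : ∀ q : {q : Ideal R // q ∈ minimalPrimes R}, ∃ x, x ∈ Q q.1 ∧ x ∉ P :=
        fun q => SetLike.not_le_iff_exists.mp (hno q.1 q.2)
      choose f hfQ hfP using hchoice
      have hfin : (minimalPrimes R).Finite := minimalPrimes.finite_of_isNoetherianRing R
      set t := hfin.toFinset.attach with htdef
      let F : ↥(ReesAlg E) := ∏ q ∈ t, f ⟨q.1, hfin.mem_toFinset.mp q.2⟩
      have hFQ : ∀ q : Ideal R, q ∈ minimalPrimes R → F ∈ Q q := by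
        intro q hq
        have hqt : (⟨q, hfin.mem_toFinset.mpr hq⟩ : {x // x ∈ hfin.toFinset}) ∈ t :=
          Finset.mem_attach _ _
        have hmul := Ideal.mul_mem_right
          (∏ x ∈ t.erase ⟨q, hfin.mem_toFinset.mpr hq⟩, f ⟨x.1, hfin.mem_toFinset.mp x.2⟩)
          (Q q) (hfQ ⟨q, hq⟩)
        rwa [Finset.mul_prod_erase t
          (fun x => f ⟨x.1, hfin.mem_toFinset.mp x.2⟩) hqt] at hmul
      have hFcoeff : ∀ m, MvPolynomial.coeff m (F : MvPolynomial (Fin e) R) ∈ nilradical R := by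
        intro m
        rw [nilradical_eq_sInf, Ideal.mem_sInf]
        rintro J hJ
        haveI : J.IsPrime := hJ
        obtain ⟨q, hqmin, hqle⟩ := Ideal.exists_minimalPrimes_le (bot_le : (⊥ : Ideal R) ≤ J)
        exact hqle ((hmemQ q F).mp (hFQ q hqmin) m)
      have hFnil : IsNilpotent F := by
        have hc1 : (F : MvPolynomial (Fin e) R)
            ∈ Ideal.map (MvPolynomial.C : R →+* MvPolynomial (Fin e) R) (nilradical R) :=
          MvPolynomial.mem_map_C_iff.mpr hFcoeff
        have hc2 : Ideal.map (MvPolynomial.C : R →+* MvPolynomial (Fin e) R) (nilradical R)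
            ≤ nilradical (MvPolynomial (Fin e) R) := by
          rw [Ideal.map_le_iff_le_comap]
          intro x hx
          exact Ideal.mem_comap.mpr (mem_nilradical.mpr ((mem_nilradical.mp hx).map _))
        obtain ⟨n, hn⟩ := mem_nilradical.mp (hc2 hc1)
        exact ⟨n, hιinj (show ι (F ^ n) = ι 0 by rw [map_pow, map_zero]; exact hn)⟩
      obtain ⟨n, hn⟩ := hFnil
      have hFP : F ∈ P := hPp.mem_of_pow_mem n (by rw [hn]; exact P.zero_mem)
      obtain ⟨q, hqt, hq⟩ := (Ideal.IsPrime.prod_mem_iff).mp hFP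
      exact hfP _ hq
    obtain ⟨q, hqmin, hQleP⟩ := hQP
    haveI hqp : q.IsPrime := hqmin.1.1
    have hPQ : P ≤ Q q := hP.2 ⟨hQprime q hqp, bot_le⟩ hQleP
    have hmq : maximalIdeal R ≤ q := by
      intro x hx
      have hxQ : algebraMap R ↥(ReesAlg E) x ∈ Q q := hPQ (hle (Ideal.mem_map_of_mem _ hx))
      have hcoeff := (hmemQ q _).mp hxQ 0
      have hcoe : ((algebraMap R ↥(ReesAlg E) x : ↥(ReesAlg E)) : MvPolynomial (Fin e) R)
          = MvPolynomial.C x := rfl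
      rw [hcoe, MvPolynomial.coeff_zero_C] at hcoeff
      exact hcoeff
    have hqle : q ≤ maximalIdeal R := IsLocalRing.le_maximalIdeal hqp.ne_top
    have heqq : q = maximalIdeal R := le_antisymm hqle hmq
    haveI hss : Subsingleton (PrimeSpectrum R) := by
      constructor
      intro a b
      have key : ∀ x : PrimeSpectrum R, x.asIdeal = maximalIdeal R := by
        intro x
        have hx1 : x.asIdeal ≤ maximalIdeal R := IsLocalRing.le_maximalIdeal x.2.ne_top
        have hx2 : q ≤ x.asIdeal := hqmin.2 ⟨x.2, bot_le⟩ (by rw [heqq]; exact hx1)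
        refine le_antisymm hx1 ?_
        rw [← heqq]
        exact hx2
      exact PrimeSpectrum.ext ((key a).trans (key b).symm)
    have : ringKrullDim R ≤ 0 := Order.krullDim_nonpos_of_subsingleton
    exact absurd hdim (not_lt.mpr this)
  -- Part 2
  have h2 : 0 < idealHeight (fibIdeal R E) := by
    have hpos : ∀ p : PrimeSpectrum ↥(ReesAlg E), fibIdeal R E ≤ p.asIdeal →
        (1 : ℕ∞) ≤ Order.height p := by
      intro p hp
      rw [ENat.one_le_iff_ne_zero]
      intro h0
      have hmin : IsMin p := Order.height_eq_zero.mp h0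
      refine h1 p.asIdeal ⟨⟨p.2, bot_le⟩, ?_⟩ hp
      intro J hJ hJp
      exact hmin (show (⟨J, hJ.1⟩ : PrimeSpectrum ↥(ReesAlg E)) ≤ p from hJp)
    refine lt_of_lt_of_le zero_lt_one ?_
    exact le_iInf fun p => le_iInf fun hp => hpos p hp
  -- Part 3
  haveI hAnt : Nontrivial ↥(ReesAlg E) :=
    ⟨⟨0, 1, fun h => zero_ne_one (α := MvPolynomial (Fin e) R)
      (by simpa using congrArg Subtype.val h)⟩⟩
  have hfin3 : aSpread R E < ⊤ := by
    have hFG : (Submodule.map (emb R e) E).FG := (IsNoetherian.noetherian E).map _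
    obtain ⟨sgen, hs⟩ := hFG
    haveI hft : Algebra.FiniteType R ↥(ReesAlg E) := by
      rw [← Subalgebra.fg_iff_finiteType]
      refine ⟨sgen, ?_⟩
      show Algebra.adjoin R ↑sgen = Algebra.adjoin R
        ((Submodule.map (emb R e) E : Submodule R (MvPolynomial (Fin e) R))
          : Set (MvPolynomial (Fin e) R))
      rw [← hs, Algebra.adjoin_span]
    obtain ⟨n, f, hf⟩ := Algebra.FiniteType.iff_quotient_mvPolynomial''.mp hft
    letI : Field (R ⧸ maximalIdeal R) := Ideal.Quotient.field _
    let π := Ideal.Quotient.mk (fibIdeal R E)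
    let g : MvPolynomial (Fin n) R →+* ↥(ReesAlg E) ⧸ fibIdeal R E := π.comp f.toRingHom
    have hg : Function.Surjective g := Ideal.Quotient.mk_surjective.comp hf
    have hkill : ∀ r ∈ maximalIdeal R, (π.comp (algebraMap R ↥(ReesAlg E))) r = 0 := fun r hr =>
      Ideal.Quotient.eq_zero_iff_mem.mpr (Ideal.mem_map_of_mem _ hr)
    let ρ : R ⧸ maximalIdeal R →+* ↥(ReesAlg E) ⧸ fibIdeal R E :=
      Ideal.Quotient.lift _ (π.comp (algebraMap R ↥(ReesAlg E))) hkill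
    let h : MvPolynomial (Fin n) (R ⧸ maximalIdeal R) →+* ↥(ReesAlg E) ⧸ fibIdeal R E :=
      MvPolynomial.eval₂Hom ρ (fun i => g (MvPolynomial.X i))
    have hcomp : h.comp (MvPolynomial.map (Ideal.Quotient.mk (maximalIdeal R))
        : MvPolynomial (Fin n) R →+* MvPolynomial (Fin n) (R ⧸ maximalIdeal R)) = g := by
      apply MvPolynomial.ringHom_ext
      · intro r
        simp only [RingHom.coe_comp, Function.comp_apply, MvPolynomial.map_C]
        have e1 : h (MvPolynomial.C (Ideal.Quotient.mk (maximalIdeal R) r))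
            = ρ (Ideal.Quotient.mk (maximalIdeal R) r) := MvPolynomial.eval₂Hom_C _ _ _
        have e2 : ρ (Ideal.Quotient.mk (maximalIdeal R) r)
            = π (algebraMap R ↥(ReesAlg E) r) := Ideal.Quotient.lift_mk _ _ _
        rw [e1, e2]
        show π (algebraMap R ↥(ReesAlg E) r) = π (f (MvPolynomial.C r))
        rw [show (MvPolynomial.C r : MvPolynomial (Fin n) R)
          = algebraMap R (MvPolynomial (Fin n) R) r from rfl, f.commutes]
      · intro i
        simp only [RingHom.coe_comp, Function.comp_apply, MvPolynomial.map_X]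
        exact MvPolynomial.eval₂Hom_X' _ _ _
    have hh : Function.Surjective h := by
      intro y
      obtain ⟨P, rfl⟩ := hg y
      exact ⟨MvPolynomial.map (Ideal.Quotient.mk (maximalIdeal R)) P,
        by rw [← hcomp]; rfl⟩
    have hle3 : aSpread R E ≤ ringKrullDim (MvPolynomial (Fin n) (R ⧸ maximalIdeal R)) :=
      ringKrullDim_le_of_surjective h hh
    refine lt_of_le_of_lt hle3 (aux_dim_mvPolyFin_lt_top _ ?_ n)
    rw [ringKrullDim_eq_zero_of_field]
    rw [← WithBot.coe_top]
    rw [show (0 : WithBot ℕ∞) = ((0 : ℕ∞) : WithBot ℕ∞) from rfl, WithBot.coe_lt_coe]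
    exact lt_top_iff_ne_top.mpr (by simp)
  have h3 : aSpread R E < ringKrullDim ↥(ReesAlg E) := by
    by_cases hne : Nonempty (PrimeSpectrum (↥(ReesAlg E) ⧸ fibIdeal R E))
    · haveI := hne
      have hAs : aSpread R E
          = Order.krullDim (PrimeSpectrum (↥(ReesAlg E) ⧸ fibIdeal R E)) := rfl
      obtain ⟨N, hN⟩ : ∃ N : ℕ, aSpread R E = ((N : ℕ∞) : WithBot ℕ∞) := by
        have hnb : aSpread R E ≠ ⊥ := by
          rw [hAs]
          intro hb
          have h0 := Order.krullDim_nonneg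
            (α := PrimeSpectrum (↥(ReesAlg E) ⧸ fibIdeal R E))
          rw [hb] at h0
          simp at h0
        obtain ⟨e', hD⟩ := WithBot.ne_bot_iff_exists.mp hnb
        have het : e' ≠ ⊤ := fun hetop => hfin3.ne (by rw [← hD, hetop, WithBot.coe_top])
        obtain ⟨N, rfl⟩ := WithTop.ne_top_iff_exists.mp het
        exact ⟨N, hD.symm⟩
      obtain ⟨s, hslen⟩ : ∃ s : LTSeries (PrimeSpectrum (↥(ReesAlg E) ⧸ fibIdeal R E)),
          s.length = N := by
        rw [hAs, Order.krullDim_eq_iSup_length] at hN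
        have hN' : (⨆ p : LTSeries (PrimeSpectrum (↥(ReesAlg E) ⧸ fibIdeal R E)),
            (p.length : ℕ∞)) = (N : ℕ∞) := WithBot.coe_injective hN
        by_contra hc
        push_neg at hc
        have hlt : ∀ p : LTSeries (PrimeSpectrum (↥(ReesAlg E) ⧸ fibIdeal R E)),
            p.length < N := by
          intro p
          refine lt_of_le_of_ne ?_ (hc p)
          have hl := le_iSup (fun p : LTSeries (PrimeSpectrum (↥(ReesAlg E) ⧸ fibIdeal R E))
            => (p.length : ℕ∞)) p
          rw [hN'] at hl
          exact_mod_cast hl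
        have hN0 : 0 < N := by
          have := hlt (RelSeries.singleton _ (Classical.arbitrary _))
          omega
        have hub : (⨆ p : LTSeries (PrimeSpectrum (↥(ReesAlg E) ⧸ fibIdeal R E)),
            (p.length : ℕ∞)) ≤ ((N - 1 : ℕ) : ℕ∞) :=
          iSup_le fun p => by exact_mod_cast Nat.le_sub_one_of_lt (hlt p)
        rw [hN'] at hub
        have := (Nat.cast_le (α := ℕ∞)).mp hub
        omega
      let π := Ideal.Quotient.mk (fibIdeal R E)
      have hπs : Function.Surjective π := Ideal.Quotient.mk_surjective
      let cm : PrimeSpectrum (↥(ReesAlg E) ⧸ fibIdeal R E) → PrimeSpectrum ↥(ReesAlg E) :=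
        fun p => ⟨Ideal.comap π p.asIdeal, Ideal.comap_isPrime _ _⟩
      have hcm : StrictMono cm := by
        intro a b hab
        refine lt_of_le_of_ne (show cm a ≤ cm b from Ideal.comap_mono hab.le) ?_
        intro hEq
        have hai := congrArg PrimeSpectrum.asIdeal hEq
        have : a.asIdeal = b.asIdeal := Ideal.comap_injective_of_surjective π hπs hai
        exact hab.ne (PrimeSpectrum.ext this)
      let t := s.map cm hcm
      have hth : t.head = cm s.head := rfl
      have hthead : fibIdeal R E ≤ t.head.asIdeal := by
        intro x hx
        rw [hth]
        exact Ideal.mem_comap.mpr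
          (by rw [Ideal.Quotient.eq_zero_iff_mem.mpr hx]; exact Submodule.zero_mem _)
      have hnotmin : ¬ IsMin t.head := by
        intro hmin
        refine h1 t.head.asIdeal ⟨⟨t.head.2, bot_le⟩, ?_⟩ hthead
        intro J hJ hJle
        exact hmin (show (⟨J, hJ.1⟩ : PrimeSpectrum ↥(ReesAlg E)) ≤ t.head from hJle)
      obtain ⟨b, hb⟩ := not_isMin_iff.mp hnotmin
      let t' := t.cons b hb
      have hlen : t'.length = N + 1 := by
        rw [show t' = t.cons b hb from rfl, RelSeries.cons_length,
          show t.length = s.length from rfl, hslen]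
      have hdim' := Order.LTSeries.length_le_krullDim t'
      rw [hlen] at hdim'
      rw [hN]
      refine lt_of_lt_of_le ?_ hdim'
      have hstep : ((N : ℕ∞) : WithBot ℕ∞) < (((N + 1 : ℕ) : ℕ∞) : WithBot ℕ∞) := by
        rw [WithBot.coe_lt_coe]
        exact_mod_cast Nat.lt_succ_self N
      exact hstep
    · rw [not_nonempty_iff] at hne
      have hbot : aSpread R E = ⊥ := Order.krullDim_eq_bot
      rw [hbot]
      refine lt_of_lt_of_le ?_
        (Order.krullDim_nonneg (α := PrimeSpectrum ↥(ReesAlg E)))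
      rw [show (0 : WithBot ℕ∞) = ((0 : ℕ∞) : WithBot ℕ∞) from rfl]
      exact WithBot.bot_lt_coe _
  exact ⟨h1, h2, h3⟩

end
end

section
/- Let (R, m) be a Noetherian local ring with dim R > 0, G ≅ R^e free of rank e > 0, and E ⊊ G an R-submodule with depth(G, E) > 0 (i.e., depth(G_n/E_n) > 0 for all large n). Then there exists a ∈ m such that a is a nonzerodivisor on G_n/E_n for all sufficiently large n and a lies in no minimal prime of R. -/
set_option synthInstance.maxHeartbeats 1000000
set_option maxHeartbeats 1000000


open IsLocalRing

noncomputable section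

section AuxRAss

variable {R : Type*} [CommRing R]

/-- Relative associated prime along a ring hom. -/
def RAss {Λ : Type*} [CommRing Λ] (f : R →+* Λ) (M : Type*) [AddCommGroup M] [Module Λ M]
    (q : Ideal R) : Prop :=
  q.IsPrime ∧ ∃ x : M, ∀ r, r ∈ q ↔ f r • x = 0

variable {Λ : Type*} [CommRing Λ] {f : R →+* Λ} {M M' : Type*}
  [AddCommGroup M] [Module Λ M] [AddCommGroup M'] [Module Λ M'] {q : Ideal R}

theorem RAss.not_of_subsingleton [Subsingleton M] : ¬ RAss f M q := by
  rintro ⟨hq, x, hx⟩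
  exact hq.ne_top (Ideal.eq_top_iff_one _ |>.mpr ((hx 1).mpr (Subsingleton.elim _ _)))

theorem RAss.of_injective (g : M →ₗ[Λ] M') (hg : Function.Injective g) (h : RAss f M q) :
    RAss f M' q := by
  obtain ⟨hq, x, hx⟩ := h
  refine ⟨hq, g x, fun r => (hx r).trans ?_⟩
  rw [← map_smul, ← g.map_zero, hg.eq_iff]

theorem RAss.sub_or_quot (Y : Submodule Λ M) (h : RAss f M q) :
    RAss f Y q ∨ RAss f (M ⧸ Y) q := by
  obtain ⟨hq, x, hx⟩ := h
  by_cases hA : ∀ r : R, f r • x ∈ Y → f r • x = 0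
  · right
    refine ⟨hq, Y.mkQ x, fun r => ?_⟩
    rw [← map_smul, Submodule.mkQ_apply, Submodule.Quotient.mk_eq_zero]
    exact ⟨fun hr => ((hx r).mp hr) ▸ Y.zero_mem, fun hr => (hx r).mpr (hA r hr)⟩
  · left
    push_neg at hA
    obtain ⟨r₀, hmem, hne⟩ := hA
    refine ⟨hq, ⟨f r₀ • x, hmem⟩, fun r => ?_⟩
    constructor
    · intro hr
      ext
      show f r • (f r₀ • x) = 0
      rw [smul_comm, (hx r).mp hr, smul_zero]
    · intro hr
      have : f r • (f r₀ • x) = 0 := congrArg Subtype.val hr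
      rw [smul_smul, ← map_mul, ← hx] at this
      rcases hq.mem_or_mem this with h1 | h2
      · exact h1
      · exact absurd ((hx r₀).mp h2) hne

end AuxRAss

section PF
variable {R : Type*} [CommRing R] {Λ : Type*} [CommRing Λ] [IsNoetherianRing Λ]

theorem RAss.finite_bound (f : R →+* Λ) (M : Type*) [AddCommGroup M] [Module Λ M]
    [Module.Finite Λ M] :
    ∃ F : Set (Ideal R), F.Finite ∧ ∀ q, RAss f M q → q ∈ F := by
  have key : ∀ N : Submodule Λ M, ∃ F : Set (Ideal R), F.Finite ∧
      ∀ q, RAss f (M ⧸ N) q → q ∈ F := by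
    intro N
    induction N using IsNoetherian.induction with
    | _ N ih =>
      rcases subsingleton_or_nontrivial (M ⧸ N) with hs | hnt
      · exact ⟨∅, Set.finite_empty, fun q hq => absurd hq RAss.not_of_subsingleton⟩
      · obtain ⟨P, hP'⟩ := associatedPrimes.nonempty Λ (M ⧸ N)
        obtain ⟨hP, y, hy⟩ := isAssociatedPrime_iff.mp hP'
        have hann : ∀ s : Λ, s • y = 0 ↔ s ∈ P := fun s => by
          rw [hy, Submodule.mem_colon_singleton, Submodule.mem_bot]
        have hyne : y ≠ 0 := by
          rintro rfl
          rw [Submodule.colon_singleton_zero] at hy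
          exact hP.ne_top hy
        have hNle : N ≤ Submodule.comap N.mkQ (Λ ∙ y) := by
          intro w hw
          simp only [Submodule.mem_comap, Submodule.mkQ_apply,
            (Submodule.Quotient.mk_eq_zero N).mpr hw]
          exact Submodule.zero_mem _
        have hNN' : N < Submodule.comap N.mkQ (Λ ∙ y) := by
          obtain ⟨z, hz⟩ := Submodule.mkQ_surjective N y
          refine lt_of_le_of_ne hNle (fun hEq => hyne ?_)
          have hzmem : z ∈ Submodule.comap N.mkQ (Λ ∙ y) := by
            simp only [Submodule.mem_comap, Submodule.mkQ_apply, hz]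
            exact Submodule.mem_span_singleton_self y
          rw [← hEq] at hzmem
          rw [← hz, Submodule.mkQ_apply, Submodule.Quotient.mk_eq_zero]
          exact hzmem
        obtain ⟨F', hF', hF'q⟩ := ih _ hNN'
        refine ⟨F' ∪ {P.comap f}, hF'.union (Set.finite_singleton _), fun q hq => ?_⟩
        rcases hq.sub_or_quot (Λ ∙ y) with hsub | hquot
        · right
          rw [Set.mem_singleton_iff]
          obtain ⟨hq', z, hz⟩ := hsub
          have hz' : ∀ r, r ∈ q ↔ f r • (z : M ⧸ N) = 0 := fun r =>
            (hz r).trans (by rw [← ZeroMemClass.coe_eq_zero]; rfl)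
          have hzne : (z : M ⧸ N) ≠ 0 := by
            intro h0
            exact hq'.ne_top (Ideal.eq_top_iff_one _ |>.mpr ((hz' 1).mpr (by rw [h0, smul_zero])))
          obtain ⟨t, ht⟩ := Submodule.mem_span_singleton.mp z.2
          have htP : t ∉ P := fun htP => hzne (by rw [← ht]; exact (hann t).mpr htP)
          ext r
          rw [Ideal.mem_comap, hz' r, ← ht, smul_smul, hann]
          exact ⟨fun h => (hP.mem_or_mem h).resolve_right htP, fun h => P.mul_mem_right t h⟩
        · left
          have hmap : (Submodule.comap N.mkQ (Λ ∙ y)).map N.mkQ = (Λ ∙ y) := by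
            rw [Submodule.map_comap_eq, Submodule.range_mkQ, top_inf_eq]
          have e : ((M ⧸ N) ⧸ (Λ ∙ y)) ≃ₗ[Λ] (M ⧸ Submodule.comap N.mkQ (Λ ∙ y)) :=
            (Submodule.quotEquivOfEq _ _ hmap.symm).trans
              (Submodule.quotientQuotientEquivQuotient N _ hNle)
          exact hF'q q (hquot.of_injective e.toLinearMap e.injective)
  obtain ⟨F, hF, hFq⟩ := key ⊥
  exact ⟨F, hF, fun q hq => hFq q (hq.of_injective
    ((Submodule.quotEquivOfEqBot (⊥ : Submodule Λ M) rfl).symm.toLinearMap)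
    (Submodule.quotEquivOfEqBot _ rfl).symm.injective)⟩

end PF


section Graded

open MvPolynomial

variable {R : Type*} [CommRing R] {e : ℕ}

local notation "S" => MvPolynomial (Fin e) R
local notation "hS" => homogeneousSubmodule (Fin e) R

theorem map_emb_le_hS (E : Submodule R (Fin e → R)) :
    Submodule.map (emb R e) E ≤ hS 1 := by
  rintro _ ⟨v, -, rfl⟩
  show (∑ i, v i • MvPolynomial.X i) ∈ hS 1
  exact Submodule.sum_mem _ fun i _ =>
    Submodule.smul_mem _ _ ((mem_homogeneousSubmodule _ _).mpr (isHomogeneous_X _ i))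

theorem pow_le_hS {A : Submodule R S} (hA : A ≤ hS 1) (n : ℕ) : A ^ n ≤ hS n := by
  induction n with
  | zero =>
    rw [pow_zero]
    rintro x hx
    obtain ⟨r, rfl⟩ := Submodule.mem_one.mp hx
    exact (mem_homogeneousSubmodule _ _).mpr (isHomogeneous_C _ r)
  | succ n ih =>
    rw [pow_succ]
    refine le_trans (mul_le_mul' ih hA) ?_
    exact homogeneousSubmodule_mul n 1

theorem reesPow_le_restrictScalars (E : Submodule R (Fin e → R)) (n : ℕ) :
    reesPow E n ≤ Submodule.restrictScalars R
      ((Ideal.span (Submodule.map (emb R e) E : Set S)) ^ n) := by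
  induction n with
  | zero => rw [reesPow, pow_zero, pow_zero, Ideal.one_eq_top]; exact le_top
  | succ n ih =>
    rw [reesPow, pow_succ, pow_succ]
    refine Submodule.mul_le.mpr fun a ha b hb => ?_
    exact Ideal.mul_mem_mul (ih ha) (Ideal.subset_span hb)

theorem mul_S_mem {W : Submodule R S} (s : S) {c : S} (hc : c ∈ W * (⊤ : Submodule R S)) :
    c * s ∈ W * (⊤ : Submodule R S) := by
  refine Submodule.mul_induction_on hc (fun w hw t _ => ?_) (fun x y hx hy => ?_)
  · rw [mul_assoc]
    exact Submodule.mul_mem_mul hw trivial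
  · rw [add_mul]; exact add_mem hx hy

theorem ideal_pow_le (E : Submodule R (Fin e → R)) (n : ℕ) :
    ∀ x ∈ (Ideal.span ((Submodule.map (emb R e) E : Submodule R S) : Set S)) ^ n,
      x ∈ ((Submodule.map (emb R e) E) ^ n * (⊤ : Submodule R S) : Submodule R S) := by
  set U := Submodule.map (emb R e) E with hU
  induction n with
  | zero =>
    intro x _
    rw [pow_zero, Submodule.one_mul]
    trivial
  | succ n ih =>
    intro x hx
    rw [pow_succ] at hx
    refine Submodule.mul_induction_on hx (fun a ha b hb => ?_) (fun y z hy hz => add_mem hy hz)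
    have ha' : a ∈ (U ^ n * ⊤ : Submodule R S) := ih a ha
    have key : ∀ b ∈ Ideal.span (U : Set S), ∀ a ∈ (U ^ n * ⊤ : Submodule R S),
        a * b ∈ (U ^ (n+1) * ⊤ : Submodule R S) := by
      intro b hb
      refine Submodule.span_induction ?_ ?_ ?_ ?_ hb
      · intro u hu a ha
        refine Submodule.mul_induction_on ha (fun w hw t _ => ?_) (fun y z hy hz => ?_)
        · have heq : w * t * u = (w * u) * t := by ring
          rw [heq]
          refine Submodule.mul_mem_mul ?_ trivial
          rw [pow_succ]
          exact Submodule.mul_mem_mul hw hu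
        · rw [add_mul]; exact add_mem hy hz
      · intro a _
        rw [mul_zero]; exact zero_mem _
      · intro b₁ b₂ _ _ h₁ h₂ a ha
        rw [mul_add]; exact add_mem (h₁ a ha) (h₂ a ha)
      · intro s b' _ h a ha
        have h1 := h a ha
        have heq : a * (s • b') = (a * b') * s := by
          rw [smul_eq_mul]; ring
        rw [heq]
        exact mul_S_mem s h1
    exact key b hb a ha'

theorem homComp_mem {U : Submodule R S} (hU : U ≤ hS 1) (n : ℕ) :
    ∀ x ∈ (U ^ n * (⊤ : Submodule R S) : Submodule R S),
      homogeneousComponent n x ∈ U ^ n := by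
  intro x hx
  refine Submodule.mul_induction_on hx (fun w hw t _ => ?_) (fun y z hy hz => ?_)
  · have hw' : w ∈ hS n := pow_le_hS hU n hw
    have ht' : w * t = ∑ d ∈ Finset.range (t.totalDegree + 1), w * homogeneousComponent d t := by
      rw [← Finset.mul_sum, sum_homogeneousComponent]
    rw [ht', map_sum]
    refine Submodule.sum_mem _ fun d _ => ?_
    have hcd : homogeneousComponent d t ∈ hS d := homogeneousComponent_mem d t
    have hprod : w * homogeneousComponent d t ∈ hS (n + d) :=
      homogeneousSubmodule_mul n d (Submodule.mul_mem_mul hw' hcd)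
    rw [homogeneousComponent_of_mem hprod]
    split_ifs with h
    · have hd0 : d = 0 := by omega
      subst hd0
      rw [homogeneousComponent_zero, mul_comm, C_mul']
      exact Submodule.smul_mem _ _ hw
    · exact zero_mem _
  · rw [map_add]; exact add_mem hy hz

/-- The key graded computation: inside the degree `n` part, the ideal power
`(U·S)^n` cuts out exactly `U^n`. -/
theorem mem_reesPow_iff_mem_ideal_pow (E : Submodule R (Fin e → R)) (n : ℕ)
    {s : S} (hs : s ∈ reesPow (⊤ : Submodule R (Fin e → R)) n) :
    s ∈ reesPow E n ↔
      s ∈ (Ideal.span ((Submodule.map (emb R e) E : Submodule R S) : Set S)) ^ n := by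
  constructor
  · exact fun h => reesPow_le_restrictScalars E n h
  · intro h
    have h1 : s ∈ ((Submodule.map (emb R e) E) ^ n * (⊤ : Submodule R S) : Submodule R S) :=
      ideal_pow_le E n s h
    have h2 := homComp_mem (map_emb_le_hS E) n s h1
    have hs' : s ∈ hS n := pow_le_hS (map_emb_le_hS ⊤) n hs
    rwa [homogeneousComponent_of_mem hs', if_pos rfl] at h2

end Graded

section Devissage

universe u
variable {R : Type*} [CommRing R] {S : Type u} [CommRing S] [IsNoetherianRing S]
  (f : R →+* S) (I : Ideal S)

/-- The shifted filtration `n ↦ I^(n+1)`. -/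
def shiftFil : I.Filtration S where
  N i := I ^ (i + 1) • ⊤
  mono i := Submodule.smul_mono_left (Ideal.pow_le_pow_right (by omega))
  smul_le i := by rw [← mul_smul, ← pow_succ']

theorem smul_top_eq_self (J : Ideal S) : (J • (⊤ : Submodule S S) : Submodule S S) = J := by
  refine le_antisymm (Submodule.smul_le.mpr fun a ha m _ => ?_) (fun x hx => ?_)
  · simpa [smul_eq_mul] using J.mul_mem_right m ha
  · simpa using Submodule.smul_mem_smul hx (Submodule.mem_top (x := (1 : S)))

theorem shiftFil_le : (shiftFil I).submodule ≤ (I.stableFiltration ⊤).submodule := by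
  intro g hg i
  have h1 := hg i
  show g.coeff i ∈ I ^ i • ⊤
  rw [smul_top_eq_self]
  rw [show (shiftFil I).N i = I ^ (i+1) • ⊤ from rfl, smul_top_eq_self] at h1
  exact Ideal.pow_le_pow_right (by omega) h1

/-- The graded module `⊕ Iⁿ/Iⁿ⁺¹`, realized inside the quotient of the Rees module
of the full filtration by the shifted one. -/
def grMod :=
  ↥(Submodule.map ((shiftFil I).submodule.mkQ)
      ((I.stableFiltration (⊤ : Submodule S S)).submodule))

instance : AddCommGroup (grMod I) := by unfold grMod; infer_instance
instance : Module (reesAlgebra I) (grMod I) := by unfold grMod; infer_instance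

instance : Module.Finite (reesAlgebra I) (grMod I) := by
  have hfg : ((I.stableFiltration (⊤ : Submodule S S)).submodule).FG := by
    rw [Ideal.Filtration.submodule_fg_iff_stable]
    · exact Ideal.stableFiltration_stable I ⊤
    · intro i
      exact IsNoetherian.noetherian _
  have hfg2 := Submodule.FG.map ((shiftFil I).submodule.mkQ) hfg
  exact Module.Finite.iff_fg.mpr hfg2

theorem key_single (n : ℕ) (x : S) (hx : x ∈ I ^ n) (q : Ideal R) (hq : q.IsPrime)
    (hchar : ∀ r, r ∈ q ↔ f r * x ∈ I ^ (n + 1)) :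
    RAss ((algebraMap S (reesAlgebra I)).comp f) (grMod I) q := by
  refine ⟨hq, ?_⟩
  have hg : (PolynomialModule.single S n x) ∈
      (I.stableFiltration (⊤ : Submodule S S)).submodule := by
    intro i
    show _ ∈ I ^ i • ⊤
    rw [smul_top_eq_self, PolynomialModule.coeff_single, Finsupp.single_apply]
    split_ifs with h
    · exact h ▸ hx
    · exact zero_mem _
  refine ⟨⟨(shiftFil I).submodule.mkQ (PolynomialModule.single S n x),
    Submodule.mem_map_of_mem hg⟩, fun r => ?_⟩
  rw [hchar r]
  refine Iff.trans ?_ ZeroMemClass.coe_eq_zero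
  have hcoe : ((((algebraMap S (reesAlgebra I)).comp f) r •
      (⟨(shiftFil I).submodule.mkQ (PolynomialModule.single S n x),
        Submodule.mem_map_of_mem hg⟩ : grMod I) : grMod I) : PolynomialModule S S ⧸ (shiftFil I).submodule) =
      (shiftFil I).submodule.mkQ
        ((((algebraMap S (reesAlgebra I)).comp f) r : reesAlgebra I) • PolynomialModule.single S n x) := by
    rw [map_smul]
    rfl
  refine Iff.trans ?_ (congrArg (· = (0 : PolynomialModule S S ⧸ (shiftFil I).submodule)) hcoe).symm.to_iff
  have hsmul : ((((algebraMap S (reesAlgebra I)).comp f) r : reesAlgebra I) •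
      PolynomialModule.single S n x : PolynomialModule S S) =
      PolynomialModule.single S n (f r * x) := by
    rw [Subalgebra.smul_def]
    show ((Polynomial.C (f r) : Polynomial S)) • (PolynomialModule.single S n x) = _
    rw [← Polynomial.monomial_zero_left, PolynomialModule.monomial_smul_single, zero_add,
      smul_eq_mul]
  rw [hsmul, Submodule.mkQ_apply, Submodule.Quotient.mk_eq_zero,
    Ideal.Filtration.mem_submodule]
  constructor
  · intro h i
    show _ ∈ I ^ (i + 1) • ⊤
    rw [smul_top_eq_self, PolynomialModule.coeff_single, Finsupp.single_apply]
    split_ifs with hh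
    · subst hh; exact h
    · exact zero_mem _
  · intro h
    have := h n
    rw [show (shiftFil I).N n = I ^ (n+1) • ⊤ from rfl, smul_top_eq_self,
      PolynomialModule.coeff_single, Finsupp.single_apply, if_pos rfl] at this
    exact this

theorem RAss.not_of_subsingleton' {M : Type*} [AddCommGroup M] [Module S M] [Subsingleton M]
    {q : Ideal R} : ¬ RAss f M q := by
  rintro ⟨hq, x, hx⟩
  exact hq.ne_top (Ideal.eq_top_iff_one _ |>.mpr ((hx 1).mpr (Subsingleton.elim _ _)))

theorem devissage
    (hbound : ∃ F : Set (Ideal R), F.Finite ∧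
      ∀ q, RAss ((algebraMap S (reesAlgebra I)).comp f) (grMod I) q → q ∈ F)
    (hsq : ∀ {M M' : Type u} [AddCommGroup M] [Module S M] [AddCommGroup M'] [Module S M']
      (g : M →ₗ[S] M') (_ : Function.Injective g) {q : Ideal R}, RAss f M q → RAss f M' q)
    (hso : ∀ {M : Type u} [AddCommGroup M] [Module S M] (Y : Submodule S M) {q : Ideal R},
      RAss f M q → RAss f (↥Y) q ∨ RAss f (M ⧸ Y) q) :
    ∃ F : Set (Ideal R), F.Finite ∧
      ∀ (n : ℕ) (q : Ideal R), RAss f (S ⧸ (I ^ n : Ideal S)) q → q ∈ F := by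
  obtain ⟨F, hF, hFq⟩ := hbound
  refine ⟨F, hF, fun n => ?_⟩
  induction n with
  | zero =>
    intro q hq
    have hsub : Subsingleton (S ⧸ (I ^ 0 : Ideal S)) :=
      Submodule.Quotient.subsingleton_iff.mpr (by rw [pow_zero, Ideal.one_eq_top])
    exact absurd hq (RAss.not_of_subsingleton' f)
  | succ n ih =>
    intro q hq
    have hle : (I ^ (n+1) : Ideal S) ≤ Submodule.comap LinearMap.id (I ^ n : Ideal S) :=
      fun x hx => Ideal.pow_le_pow_right (Nat.le_succ n) hx
    set π : (S ⧸ (I ^ (n+1) : Ideal S)) →ₗ[S] (S ⧸ (I ^ n : Ideal S)) :=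
      Submodule.mapQ _ _ LinearMap.id hle with hπ
    rcases hso (LinearMap.ker π) hq with hsub | hquot
    · obtain ⟨hq', z, hz⟩ := hsub
      obtain ⟨x, hxmk⟩ := Submodule.Quotient.mk_surjective _ (z : S ⧸ (I ^ (n+1) : Ideal S))
      have hxI : x ∈ (I ^ n : Ideal S) := by
        have h0 : π (z : S ⧸ (I ^ (n+1) : Ideal S)) = 0 := z.2
        rw [← hxmk, hπ, Submodule.mapQ_apply, LinearMap.id_apply] at h0
        exact (Submodule.Quotient.mk_eq_zero _).mp h0
      apply hFq
      refine key_single f I n x hxI q hq' (fun r => ?_)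
      rw [hz r, ← ZeroMemClass.coe_eq_zero]
      have hc : ((f r • z : ↥(LinearMap.ker π)) : S ⧸ (I ^ (n+1) : Ideal S)) =
          f r • (z : S ⧸ (I ^ (n+1) : Ideal S)) := rfl
      rw [hc, ← hxmk, ← Submodule.Quotient.mk_smul, Submodule.Quotient.mk_eq_zero, smul_eq_mul]
    · have hπs : Function.Surjective π := by
        rintro y
        obtain ⟨x, rfl⟩ := Submodule.Quotient.mk_surjective _ y
        exact ⟨Submodule.Quotient.mk x, by rw [hπ, Submodule.mapQ_apply, LinearMap.id_apply]⟩
      exact ih q (hsq (LinearMap.quotKerEquivOfSurjective π hπs).toLinearMap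
        (LinearMap.quotKerEquivOfSurjective π hπs).injective hquot)

end Devissage

section Helpers

variable {R : Type*} [CommRing R]

theorem reg_of_depth_pos [IsLocalRing R] {M : Type*} [AddCommGroup M] [Module R M]
    (h : 0 < mdepth R M) : ∃ r ∈ maximalIdeal R, IsSMulRegular M r := by
  unfold mdepth rdepth at h
  rw [lt_iSup_iff] at h
  obtain ⟨rs, h⟩ := h
  rw [lt_iSup_iff] at h
  obtain ⟨h1, h⟩ := h
  rw [lt_iSup_iff] at h
  obtain ⟨h2, hlen⟩ := h
  match rs, h1, h2 with
  | [], _, _ => simp at hlen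
  | r :: rest, h1, h2 =>
    refine ⟨r, h1 r List.mem_cons_self, ?_⟩
    have hreg := h2.toIsWeaklyRegular.regular_mod_prev 0 (by simp)
    simp only [List.take_zero, List.getElem_cons_zero] at hreg
    have h0 : (Ideal.ofList ([] : List R) • ⊤ : Submodule R M) = ⊥ := by
      rw [Ideal.ofList_nil, Submodule.bot_smul]
    replace hreg : IsSMulRegular (M ⧸ (⊥ : Submodule R M)) r := by rw [← h0]; exact hreg
    have hinj : Function.Injective (⊥ : Submodule R M).mkQ := by
      rw [← LinearMap.ker_eq_bot, Submodule.ker_mkQ]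
    intro x y hxy
    apply hinj
    apply hreg
    show r • (⊥ : Submodule R M).mkQ x = r • (⊥ : Submodule R M).mkQ y
    rw [← map_smul, ← map_smul]
    exact congrArg _ hxy

theorem max_not_minimal [IsLocalRing R] (hdim : (0 : WithBot ℕ∞) < ringKrullDim R) :
    maximalIdeal R ∉ minimalPrimes R := by
  intro hm
  have h1 : ∀ p : PrimeSpectrum R, p.asIdeal = maximalIdeal R := by
    intro p
    have hle : p.asIdeal ≤ maximalIdeal R := IsLocalRing.le_maximalIdeal p.2.ne_top
    exact le_antisymm hle (hm.2 ⟨p.2, bot_le⟩ hle)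
  have hsub : Subsingleton (PrimeSpectrum R) :=
    ⟨fun p q => PrimeSpectrum.ext ((h1 p).trans (h1 q).symm)⟩
  have h2 : ringKrullDim R ≤ 0 := Order.krullDim_nonpos_of_subsingleton
  exact absurd (lt_of_lt_of_le hdim h2) (by simp)

end Helpers

theorem stmt9 (R : Type*) [CommRing R] [IsNoetherianRing R] [IsLocalRing R]
    (e : ℕ) (he : 0 < e) (E : Submodule R (Fin e → R)) (hE : E ≠ ⊤)
    (hdim : (0 : WithBot ℕ∞) < ringKrullDim R)
    (hdepth : ∃ N, ∀ n ≥ N, 0 < mdepth R (GmodE E n)) :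
    ∃ a ∈ maximalIdeal R, (∃ N, ∀ n ≥ N, IsSMulRegular (GmodE E n) a) ∧
      ∀ p ∈ minimalPrimes R, a ∉ p := by
  classical
  obtain ⟨N, hN⟩ := hdepth
  have hreg : ∀ n ≥ N, ∃ r ∈ maximalIdeal R, IsSMulRegular (GmodE E n) r :=
    fun n hn => reg_of_depth_pos (hN n hn)
  set S' := MvPolynomial (Fin e) R with hS'
  set I : Ideal S' := Ideal.span ((Submodule.map (emb R e) E : Submodule R S') : Set S') with hI
  -- the uniform finite set of primes
  obtain ⟨F, hFfin, hFmem⟩ :=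
    devissage (algebraMap R S') I
      (RAss.finite_bound ((algebraMap S' (reesAlgebra I)).comp (algebraMap R S')) (grMod I))
      (@fun M M' _ _ _ _ g hg q hq => hq.of_injective g hg)
      (@fun M _ _ Y q hq => hq.sub_or_quot Y)
  have hminfin : (minimalPrimes R).Finite := minimalPrimes.finite_of_isNoetherianRing R
  set B : Set (Ideal R) :=
    {p | p ∈ F ∪ minimalPrimes R ∧ p.IsPrime ∧ p ≠ maximalIdeal R} with hB
  have hBfin : B.Finite := (hFfin.union hminfin).subset (fun p hp => hp.1)
  have hmnotmin := max_not_minimal (R := R) hdim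
  -- prime avoidance
  have hnotsub : ¬ ((maximalIdeal R : Set R) ⊆ ⋃ p ∈ (hBfin.toFinset : Set (Ideal R)), ↑p) := by
    rw [Ideal.subset_union_prime ⊥ ⊥
      (fun p hp _ _ => ((hBfin.mem_toFinset.mp hp).2.1))]
    rintro ⟨p, hpmem, hle⟩
    have hp := hBfin.mem_toFinset.mp hpmem
    exact hp.2.2 (((IsLocalRing.maximalIdeal.isMaximal R).eq_of_le hp.2.1.ne_top hle).symm)
  obtain ⟨a, ham, hanot⟩ := Set.not_subset.mp hnotsub
  have hnotp : ∀ p ∈ B, a ∉ p := fun p hp hap =>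
    hanot (Set.mem_biUnion (hBfin.mem_toFinset.mpr hp) hap)
  refine ⟨a, ham, ⟨N, fun n hn => ?_⟩, fun p hp =>
    hnotp p ⟨Or.inr hp, hp.1.1, fun hpm => hmnotmin (hpm ▸ hp)⟩⟩
  -- regularity for n ≥ N
  by_contra hnreg
  obtain ⟨x, y0, hxy, hne⟩ := Function.not_injective_iff.mp hnreg
  set z : GmodE E n := x - y0 with hz
  have hz0 : z ≠ 0 := sub_ne_zero.mpr hne
  have haz : a • z = 0 := by rw [hz, smul_sub, hxy, sub_self]
  obtain ⟨P, hPassoc, hPle⟩ := exists_le_isAssociatedPrime_of_isNoetherianRing R z hz0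
  have haP : a ∈ P := hPle (Submodule.mem_colon_singleton.mpr (by rw [Submodule.mem_bot]; exact haz))
  obtain ⟨hPprime, y, hy⟩ := isAssociatedPrime_iff.mp hPassoc
  have hyne : y ≠ 0 := by
    rintro rfl
    rw [Submodule.colon_singleton_zero] at hy
    exact hPprime.ne_top hy
  obtain ⟨r, hrm, hrreg⟩ := hreg n hn
  have hPm : P ≠ maximalIdeal R := by
    intro hPm
    apply hyne
    have hr : r • y = 0 := by
      have : r ∈ P := hPm ▸ hrm
      rwa [hy, Submodule.mem_colon_singleton, Submodule.mem_bot] at this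
    have := hrreg (show r • y = r • 0 by rw [hr, smul_zero])
    exact this
  -- transfer to RAss over the polynomial ring
  obtain ⟨s, hs⟩ := Submodule.Quotient.mk_surjective _ y
  have hRAss : RAss (algebraMap R S') (S' ⧸ (I ^ n : Ideal S')) P := by
    refine ⟨hPprime, Submodule.Quotient.mk ((s : S')), fun r' => ?_⟩
    have lhs1 : r' ∈ P ↔ r' • y = 0 := by
      rw [hy, Submodule.mem_colon_singleton, Submodule.mem_bot]
    have lhs2 : r' • y = 0 ↔ (r' • (s : S') : S') ∈ reesPow E n := by
      rw [← hs, ← Submodule.Quotient.mk_smul, Submodule.Quotient.mk_eq_zero]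
      rfl
    have rhs1 : (algebraMap R S') r' • (Submodule.Quotient.mk ((s : S')) :
        S' ⧸ (I ^ n : Ideal S')) = 0 ↔ r' • (s : S') ∈ (I ^ n : Ideal S') := by
      rw [← Submodule.Quotient.mk_smul, Submodule.Quotient.mk_eq_zero, algebraMap_smul]
    rw [lhs1, lhs2, rhs1]
    exact mem_reesPow_iff_mem_ideal_pow E n
      (Submodule.smul_mem _ _ s.2)
  exact hnotp P ⟨Or.inl (hFmem n P hRAss), hPprime, hPm⟩ haP

end
end

section
/- Let (R, m) be a Noetherian local ring with dim R > 0, G ≅ R^e free of rank e > 0, and E ⊊ G an R-submodule. If a ∈ m is a nonzerodivisor on G_n/E_n for every n ≥ 1, then: (1) aG_n ∩ E_n = aE_n ⊆ m·E_n for all n ≥ 1; (2) R_{G̅}(E̅) ≅ R_G(E)/a·R_G(E) as graded rings, where G̅ = G/aG, E̅ = (E+aG)/aG; (3) F_{G̅}(E̅) ≅ F_G(E) as graded rings. -/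
open IsLocalRing

noncomputable section

section Aux

open MvPolynomial

variable {R : Type*} [CommRing R] {e : ℕ}

lemma emb_apply (v : Fin e → R) : emb R e v = ∑ i, v i • X i := rfl

lemma X_mem_embTop (i : Fin e) :
    (X i : MvPolynomial (Fin e) R) ∈ Submodule.map (emb R e) ⊤ := by
  refine ⟨Pi.single i 1, trivial, ?_⟩
  rw [emb_apply, Finset.sum_eq_single i]
  · simp
  · intro j _ hj
    rw [Pi.single_eq_of_ne hj]; simp
  · simp

lemma degree_add' (d₁ d₂ : Fin e →₀ ℕ) : (d₁ + d₂).degree = d₁.degree + d₂.degree := by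
  simp only [Finsupp.degree_eq_weight_one, map_add]

lemma degree_single' (i : Fin e) (b : ℕ) : (Finsupp.single i b).degree = b := by
  simp [Finsupp.degree_eq_weight_one, Finsupp.weight_apply, Finsupp.sum_single_index]

lemma monomial_mem_reesPowTop (d : Fin e →₀ ℕ) :
    ∀ r : R, monomial d r ∈ reesPow (⊤ : Submodule R (Fin e → R)) d.degree := by
  induction d using Finsupp.induction with
  | zero =>
    intro r
    rw [map_zero, reesPow, pow_zero]
    exact Submodule.mem_one.mpr ⟨r, by rw [algebraMap_eq]; simp⟩
  | single_add a b f ha hb ih =>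
    intro r
    have hmon : monomial (Finsupp.single a b + f) r = (X a) ^ b * monomial f r := by
      rw [X_pow_eq_monomial, monomial_mul, one_mul]
    rw [degree_add', degree_single', reesPow, pow_add, hmon]
    exact Submodule.mul_mem_mul (Submodule.pow_mem_pow _ (X_mem_embTop a) b) (ih r)

lemma homogComp_mem_smul (I : Ideal R) (x : MvPolynomial (Fin e) R)
    (hx : ∀ d, coeff d x ∈ I) (n : ℕ) :
    homogeneousComponent n x ∈ I • reesPow (⊤ : Submodule R (Fin e → R)) n := by
  rw [← support_sum_monomial_coeff (homogeneousComponent n x)]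
  refine Submodule.sum_mem _ fun d hd => ?_
  have hdeg : d.degree = n := by
    by_contra h
    have h2 := coeff_homogeneousComponent (σ := Fin e) (R := R) n x d
    rw [if_neg h] at h2
    exact mem_support_iff.mp hd h2
  have hc : coeff d (homogeneousComponent n x) ∈ I := by
    rw [coeff_homogeneousComponent, if_pos hdeg]; exact hx d
  have hmono : monomial d (coeff d (homogeneousComponent n x)) =
      (coeff d (homogeneousComponent n x)) • monomial d (1 : R) := by
    rw [smul_monomial, smul_eq_mul, mul_one]
  rw [hmono]
  exact Submodule.smul_mem_smul hc (hdeg ▸ monomial_mem_reesPowTop d 1)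

lemma homogComp_mem_reesPow {E : Submodule R (Fin e → R)} {x : MvPolynomial (Fin e) R}
    (hx : x ∈ ReesAlg E) : ∀ n, homogeneousComponent n x ∈ reesPow E n := by
  induction hx using Algebra.adjoin_induction with
  | mem y hy =>
    intro n
    have hyh : y ∈ homogeneousSubmodule (Fin e) R 1 := by
      obtain ⟨v, -, rfl⟩ := hy
      rw [emb_apply]
      exact Submodule.sum_mem _ fun i _ => Submodule.smul_mem _ _
        ((mem_homogeneousSubmodule _ _).mpr (isHomogeneous_X _ _))
    rw [homogeneousComponent_of_mem hyh]
    split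
    · next h => subst h; rw [reesPow, pow_one]; exact hy
    · exact Submodule.zero_mem _
  | algebraMap r =>
    intro n
    have h0 : (algebraMap R (MvPolynomial (Fin e) R)) r ∈ homogeneousSubmodule (Fin e) R 0 := by
      rw [algebraMap_eq, mem_homogeneousSubmodule]
      exact isHomogeneous_C _ _
    rw [homogeneousComponent_of_mem h0]
    split
    · next h => subst h; rw [reesPow, pow_zero]; exact Submodule.mem_one.mpr ⟨r, rfl⟩
    · exact Submodule.zero_mem _
  | add x y hx' hy' ihx ihy =>
    intro n
    rw [map_add]
    exact Submodule.add_mem _ (ihx n) (ihy n)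
  | mul x y hx' hy' ihx ihy =>
    intro n
    have hxy : x * y = ∑ i ∈ Finset.range (x.totalDegree + 1),
        ∑ j ∈ Finset.range (y.totalDegree + 1),
          homogeneousComponent i x * homogeneousComponent j y := by
      rw [← Finset.sum_mul_sum, sum_homogeneousComponent, sum_homogeneousComponent]
    rw [hxy, map_sum]
    refine Submodule.sum_mem _ fun i _ => ?_
    rw [map_sum]
    refine Submodule.sum_mem _ fun j _ => ?_
    have hmem : homogeneousComponent i x * homogeneousComponent j y ∈
        homogeneousSubmodule (Fin e) R (i + j) :=
      homogeneousSubmodule_mul i j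
        (Submodule.mul_mem_mul (homogeneousComponent_mem i x) (homogeneousComponent_mem j y))
    rw [homogeneousComponent_of_mem hmem]
    split
    · next h =>
      subst h
      rw [reesPow, pow_add]
      exact Submodule.mul_mem_mul (ihx i) (ihy j)
    · exact Submodule.zero_mem _

lemma reesPow_le_reesAlg (E : Submodule R (Fin e → R)) (n : ℕ) :
    reesPow E n ≤ Subalgebra.toSubmodule (ReesAlg E) := by
  induction n with
  | zero =>
    rw [reesPow, pow_zero, Submodule.one_le]
    exact (ReesAlg E).one_mem
  | succ n ih =>
    rw [reesPow, pow_succ]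
    refine Submodule.mul_le.mpr fun x hx y hy => ?_
    exact (ReesAlg E).mul_mem (ih hx) (Algebra.subset_adjoin hy)

lemma reesPow_mono {E F : Submodule R (Fin e → R)} (h : E ≤ F) (n : ℕ) :
    reesPow E n ≤ reesPow F n := by
  induction n with
  | zero => exact le_rfl
  | succ n ih =>
    rw [reesPow, reesPow, pow_succ, pow_succ]
    exact mul_le_mul' ih (Submodule.map_mono h)

lemma part1 {E : Submodule R (Fin e → R)} {a : R} (n : ℕ)
    (hreg : IsSMulRegular (GmodE E n) a) :
    Ideal.span {a} • reesPow (⊤ : Submodule R (Fin e → R)) n ⊓ reesPow E n =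
      Ideal.span {a} • reesPow E n := by
  apply le_antisymm
  · rintro x ⟨hx1, hx2⟩
    rw [Submodule.ideal_span_singleton_smul] at hx1 ⊢
    obtain ⟨g, hg, rfl⟩ := Set.mem_smul_set.mp hx1
    have hq : (Submodule.Quotient.mk (⟨g, hg⟩ : reesPow (⊤ : Submodule R (Fin e → R)) n) :
        GmodE E n) = 0 := by
      refine hreg ?_
      show a • _ = a • (0 : GmodE E n)
      rw [smul_zero, ← Submodule.Quotient.mk_smul, Submodule.Quotient.mk_eq_zero]
      exact hx2
    rw [Submodule.Quotient.mk_eq_zero, Submodule.mem_comap] at hq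
    exact Set.smul_mem_smul_set hq
  · exact le_inf (smul_mono_right _ (reesPow_mono le_top n)) Submodule.smul_le_right


variable (I : Ideal R)

lemma phi_emb (v : Fin e → R) :
    MvPolynomial.map (Ideal.Quotient.mk I) (emb R e v) =
      emb (R ⧸ I) e (fun i => Ideal.Quotient.mk I (v i)) := by
  rw [emb_apply, emb_apply, map_sum]
  refine Finset.sum_congr rfl fun i _ => ?_
  rw [smul_eq_C_mul, map_mul, map_C, MvPolynomial.map_X, ← smul_eq_C_mul]

lemma phi_mem (E : Submodule R (Fin e → R)) {x : MvPolynomial (Fin e) R} (hx : x ∈ ReesAlg E) :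
    MvPolynomial.map (Ideal.Quotient.mk I) x ∈ ReesAlg (pushE I E) := by
  induction hx using Algebra.adjoin_induction with
  | mem y hy =>
    obtain ⟨v, hv, rfl⟩ := hy
    rw [phi_emb]
    exact Algebra.subset_adjoin
      (Submodule.mem_map_of_mem (Submodule.subset_span ⟨v, hv, rfl⟩))
  | algebraMap r =>
    rw [algebraMap_eq, map_C]
    exact (ReesAlg (pushE I E)).algebraMap_mem (Ideal.Quotient.mk I r)
  | add x y hx' hy' ihx ihy => rw [map_add]; exact add_mem ihx ihy
  | mul x y hx' hy' ihx ihy => rw [map_mul]; exact mul_mem ihx ihy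

lemma phi_surj (E : Submodule R (Fin e → R)) {w : MvPolynomial (Fin e) (R ⧸ I)}
    (hw : w ∈ ReesAlg (pushE I E)) :
    ∃ x ∈ ReesAlg E, MvPolynomial.map (Ideal.Quotient.mk I) x = w := by
  induction hw using Algebra.adjoin_induction with
  | mem y hy =>
    obtain ⟨u, hu, rfl⟩ := hy
    induction hu using Submodule.span_induction with
    | mem u hu =>
      obtain ⟨v, hv, rfl⟩ := hu
      exact ⟨emb R e v, Algebra.subset_adjoin (Submodule.mem_map_of_mem hv), phi_emb I v⟩
    | zero => exact ⟨0, zero_mem _, by rw [map_zero, map_zero]⟩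
    | add u₁ u₂ h₁ h₂ ih₁ ih₂ =>
      obtain ⟨x₁, hx₁, hpx₁⟩ := ih₁
      obtain ⟨x₂, hx₂, hpx₂⟩ := ih₂
      exact ⟨x₁ + x₂, add_mem hx₁ hx₂, by rw [map_add, map_add, hpx₁, hpx₂]⟩
    | smul c u hu ih =>
      obtain ⟨x, hx, hpx⟩ := ih
      obtain ⟨r, rfl⟩ := Ideal.Quotient.mk_surjective c
      refine ⟨r • x, (ReesAlg E).smul_mem hx r, ?_⟩
      rw [smul_eq_C_mul, map_mul, map_C, hpx, map_smul, smul_eq_C_mul]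
  | algebraMap c =>
    obtain ⟨r, rfl⟩ := Ideal.Quotient.mk_surjective c
    exact ⟨algebraMap R _ r, (ReesAlg E).algebraMap_mem r,
      by rw [algebraMap_eq, map_C, algebraMap_eq]⟩
  | add x y hx' hy' ihx ihy =>
    obtain ⟨x₁, hx₁, hpx₁⟩ := ihx
    obtain ⟨x₂, hx₂, hpx₂⟩ := ihy
    exact ⟨x₁ + x₂, add_mem hx₁ hx₂, by rw [map_add, hpx₁, hpx₂]⟩
  | mul x y hx' hy' ihx ihy =>
    obtain ⟨x₁, hx₁, hpx₁⟩ := ihx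
    obtain ⟨x₂, hx₂, hpx₂⟩ := ihy
    exact ⟨x₁ * x₂, mul_mem hx₁ hx₂, by rw [map_mul, hpx₁, hpx₂]⟩

/-- The map `R_G(E) → R_{G/IG}(E+IG/IG)` induced by reduction of coefficients. -/
def psi (E : Submodule R (Fin e → R)) : ↥(ReesAlg E) →+* ↥(ReesAlg (pushE I E)) :=
  RingHom.codRestrict
    ((MvPolynomial.map (Ideal.Quotient.mk I)).comp (ReesAlg E).val.toRingHom)
    (ReesAlg (pushE I E))
    (fun x => phi_mem I E x.2)

lemma psi_coe (E : Submodule R (Fin e → R)) (x : ↥(ReesAlg E)) :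
    (psi I E x : MvPolynomial (Fin e) (R ⧸ I)) =
      MvPolynomial.map (Ideal.Quotient.mk I) (x : MvPolynomial (Fin e) R) := rfl

lemma psi_surj (E : Submodule R (Fin e → R)) : Function.Surjective (psi I E) := by
  rintro ⟨w, hw⟩
  obtain ⟨x, hx, hpx⟩ := phi_surj I E hw
  exact ⟨⟨x, hx⟩, Subtype.ext hpx⟩

lemma psi_comp_algebraMap (E : Submodule R (Fin e → R)) :
    (psi I E).comp (algebraMap R ↥(ReesAlg E)) =
      (algebraMap (R ⧸ I) ↥(ReesAlg (pushE I E))).comp (Ideal.Quotient.mk I) := by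
  refine RingHom.ext fun r => Subtype.ext ?_
  show (psi I E (algebraMap R ↥(ReesAlg E) r) : MvPolynomial (Fin e) (R ⧸ I)) = _
  rw [psi_coe]
  have h1 : ((algebraMap R ↥(ReesAlg E) r : ↥(ReesAlg E)) : MvPolynomial (Fin e) R) = C r := by
    rw [← algebraMap_eq]; rfl
  have h2 : ((algebraMap (R ⧸ I) ↥(ReesAlg (pushE I E)) (Ideal.Quotient.mk I r) :
      ↥(ReesAlg (pushE I E))) : MvPolynomial (Fin e) (R ⧸ I)) = C (Ideal.Quotient.mk I r) := by
    rw [← algebraMap_eq]; rfl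
  rw [h1, map_C]
  exact h2.symm


lemma psi_ker {E : Submodule R (Fin e → R)} {a : R}
    (hreg : ∀ n ≥ 1, IsSMulRegular (GmodE E n) a) :
    RingHom.ker (psi (Ideal.span {a}) E) =
      Ideal.map (algebraMap R ↥(ReesAlg E)) (Ideal.span {a}) := by
  apply le_antisymm
  · intro xi hxi
    rw [RingHom.mem_ker] at hxi
    have h0 : MvPolynomial.map (Ideal.Quotient.mk (Ideal.span {a}))
        (xi : MvPolynomial (Fin e) R) = 0 := congrArg Subtype.val hxi
    have hcoeff : ∀ d, coeff d (xi : MvPolynomial (Fin e) R) ∈ Ideal.span {a} := by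
      intro d
      have h1 := congrArg (coeff d) h0
      rw [coeff_map, coeff_zero] at h1
      exact Ideal.Quotient.eq_zero_iff_mem.mp h1
    have hx : (xi : MvPolynomial (Fin e) R) ∈
        Ideal.span {a} • (Subalgebra.toSubmodule (ReesAlg E)) := by
      rw [← sum_homogeneousComponent (xi : MvPolynomial (Fin e) R)]
      refine Submodule.sum_mem _ fun n _ => ?_
      have h1 := homogComp_mem_smul (Ideal.span {a}) (xi : MvPolynomial (Fin e) R) hcoeff n
      rcases Nat.eq_zero_or_pos n with hn | hn
      · subst hn
        have htop : reesPow (⊤ : Submodule R (Fin e → R)) 0 = reesPow E 0 := by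
          rw [reesPow, reesPow, pow_zero, pow_zero]
        rw [htop] at h1
        exact smul_mono_right _ (reesPow_le_reesAlg E 0) h1
      · have h2 := homogComp_mem_reesPow xi.2 n
        have h3 : homogeneousComponent n (xi : MvPolynomial (Fin e) R) ∈
            Ideal.span {a} • reesPow (⊤ : Submodule R (Fin e → R)) n ⊓ reesPow E n := ⟨h1, h2⟩
        rw [part1 n (hreg n hn)] at h3
        exact smul_mono_right _ (reesPow_le_reesAlg E n) h3
    rw [Submodule.ideal_span_singleton_smul] at hx
    obtain ⟨y, hy, hxy⟩ := Set.mem_smul_set.mp hx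
    rw [Ideal.map_span, Set.image_singleton, Ideal.mem_span_singleton']
    refine ⟨⟨y, hy⟩, Subtype.ext ?_⟩
    show y * ((algebraMap R ↥(ReesAlg E) a : ↥(ReesAlg E)) : MvPolynomial (Fin e) R) =
      (xi : MvPolynomial (Fin e) R)
    have h4 : ((algebraMap R ↥(ReesAlg E) a : ↥(ReesAlg E)) : MvPolynomial (Fin e) R) = C a := by
      rw [← algebraMap_eq]; rfl
    rw [h4, mul_comm, ← smul_eq_C_mul]
    exact hxy
  · rw [Ideal.map_le_iff_le_comap]
    intro r hr
    rw [Ideal.mem_comap, RingHom.mem_ker]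
    refine Subtype.ext ?_
    rw [psi_coe]
    have h4 : ((algebraMap R ↥(ReesAlg E) r : ↥(ReesAlg E)) : MvPolynomial (Fin e) R) = C r := by
      rw [← algebraMap_eq]; rfl
    rw [h4, map_C, Ideal.Quotient.eq_zero_iff_mem.mpr hr, map_zero]
    rfl

end Aux

theorem stmt12 (R : Type*) [CommRing R] [IsNoetherianRing R] [IsLocalRing R]
    (e : ℕ) (he : 0 < e) (E : Submodule R (Fin e → R)) (hE : E ≠ ⊤)
    (hdim : (0 : WithBot ℕ∞) < ringKrullDim R)
    (a : R) (ha : a ∈ maximalIdeal R)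
    (hreg : ∀ n ≥ 1, IsSMulRegular (GmodE E n) a) :
    (∀ n ≥ 1,
      Ideal.span {a} • reesPow (⊤ : Submodule R (Fin e → R)) n ⊓ reesPow E n =
        Ideal.span {a} • reesPow E n ∧
      Ideal.span {a} • reesPow E n ≤ maximalIdeal R • reesPow E n) ∧
    Nonempty (↥(ReesAlg (pushE (Ideal.span {a}) E)) ≃+*
      (↥(ReesAlg E) ⧸ Ideal.map (algebraMap R ↥(ReesAlg E)) (Ideal.span {a}))) ∧
    Nonempty ((↥(ReesAlg (pushE (Ideal.span {a}) E)) ⧸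
        Ideal.map (algebraMap (R ⧸ Ideal.span {a}) ↥(ReesAlg (pushE (Ideal.span {a}) E)))
          (Ideal.map (Ideal.Quotient.mk (Ideal.span {a})) (maximalIdeal R))) ≃+*
      (↥(ReesAlg E) ⧸ fibIdeal R E)) := by
  have hspan_le : Ideal.span {a} ≤ maximalIdeal R := by
    rw [Ideal.span_le, Set.singleton_subset_iff]; exact ha
  refine ⟨fun n hn => ⟨part1 n (hreg n hn), Submodule.smul_mono_left hspan_le⟩, ?_, ?_⟩
  · exact ⟨((Ideal.quotEquivOfEq (psi_ker hreg).symm).trans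
      (RingHom.quotientKerEquivOfSurjective (psi_surj (Ideal.span {a}) E))).symm⟩
  · set I := Ideal.span {a} with hI
    set K : Ideal ↥(ReesAlg (pushE I E)) :=
      Ideal.map (algebraMap (R ⧸ I) ↥(ReesAlg (pushE I E)))
        (Ideal.map (Ideal.Quotient.mk I) (maximalIdeal R)) with hK
    have hKmap : K = Ideal.map (psi I E) (fibIdeal R E) := by
      rw [hK, fibIdeal, Ideal.map_map, Ideal.map_map, psi_comp_algebraMap]
    have hsurjθ : Function.Surjective ((Ideal.Quotient.mk K).comp (psi I E)) :=
      (Ideal.Quotient.mk_surjective).comp (psi_surj I E)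
    have hkerθ : RingHom.ker ((Ideal.Quotient.mk K).comp (psi I E)) = fibIdeal R E := by
      rw [← RingHom.comap_ker, Ideal.mk_ker, hKmap,
        Ideal.comap_map_of_surjective _ (psi_surj I E), ← RingHom.ker_eq_comap_bot,
        psi_ker hreg]
      refine sup_eq_left.mpr ?_
      exact Ideal.map_mono hspan_le
    exact ⟨((Ideal.quotEquivOfEq hkerθ.symm).trans
      (RingHom.quotientKerEquivOfSurjective hsurjθ)).symm⟩


end
end
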